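/- arXiv:1706.06444 — 12 statements merged into one kernel-verified Lean document; each statement's English description precedes it below -/
import Mathlib

section
/- Let T and U be closed subspaces of a separable Hilbert space H with cos(φ_{T,U}) > 0, where cos(φ_{T,U}) = inf_{g ∈ T, ‖g‖=1} ‖P_U g‖. Then for every frame (u_j) for U with frame bounds A and B, the projected sequence (P_T u_j) is a frame for T with frame bounds A·cos²(φ_{T,U}) and B. -/
noncomputable section
open scoped InnerProductSpace ENNReal

/-- The sequence space ℓ²(ℕ). -/
abbrev Lp2 : Type := lp (fun _ : ℕ => ℂ) 2

/-- `u` is a frame for the subspace `U` with frame bounds `A` and `B`: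
`A‖f‖² ≤ Σ_j |⟨f,u_j⟩|² ≤ B‖f‖²` for all `f ∈ U`, and all `u_j ∈ U`. -/
def IsFrameFor {H : Type} [NormedAddCommGroup H] [InnerProductSpace ℂ H]
    (u : ℕ → H) (U : Submodule ℂ H) (A B : ℝ) : Prop :=
  (∀ j, u j ∈ U) ∧
    ∀ f ∈ U, A * ‖f‖ ^ 2 ≤ ∑' j, ‖⟪u j, f⟫_ℂ‖ ^ 2 ∧
      ∑' j, ‖⟪u j, f⟫_ℂ‖ ^ 2 ≤ B * ‖f‖ ^ 2

/-- `cos(φ_{T,U}) = inf_{g ∈ T, ‖g‖=1} ‖P_U g‖` (orthogonal-projection form). -/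
def cosAngleP {H : Type} [NormedAddCommGroup H] [InnerProductSpace ℂ H]
    [CompleteSpace H] (T U : Submodule ℂ H) [CompleteSpace U] : ℝ :=
  sInf {r : ℝ | ∃ g ∈ T, ‖g‖ = 1 ∧ r = ‖(U.orthogonalProjectionOnto g : H)‖}

/-- `cos(φ_{T,Y}) = inf_{g ∈ T, ‖g‖=1} sup_{v ∈ Y, ‖v‖=1} |⟨g,v⟩|` (inner-product form,
for a general subset `Y`). -/
def cosAngleS {H : Type} [NormedAddCommGroup H] [InnerProductSpace ℂ H]
    (T : Submodule ℂ H) (Y : Set H) : ℝ :=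
  sInf {r : ℝ | ∃ g ∈ T, ‖g‖ = 1 ∧
    r = sSup {s : ℝ | ∃ v ∈ Y, ‖v‖ = 1 ∧ s = ‖⟪g, v⟫_ℂ‖}}

lemma cosAngleP_mul_norm_le {H : Type} [NormedAddCommGroup H] [InnerProductSpace ℂ H]
    [CompleteSpace H] (T U : Submodule ℂ H) [CompleteSpace U] {g : H} (hg : g ∈ T) :
    cosAngleP T U * ‖g‖ ≤ ‖(U.orthogonalProjectionOnto g : H)‖ := by
  rcases eq_or_ne g 0 with rfl | hne
  · simp
  have hg0 : (0:ℝ) < ‖g‖ := norm_pos_iff.mpr hne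
  have hmem : ‖(U.orthogonalProjectionOnto ((‖g‖:ℂ)⁻¹ • g) : H)‖ ∈
      {r : ℝ | ∃ g ∈ T, ‖g‖ = 1 ∧ r = ‖(U.orthogonalProjectionOnto g : H)‖} := by
    refine ⟨(‖g‖:ℂ)⁻¹ • g, T.smul_mem _ hg, ?_, rfl⟩
    simp [norm_smul, hg0.ne']
  have hbdd : BddBelow {r : ℝ | ∃ g ∈ T, ‖g‖ = 1 ∧ r = ‖(U.orthogonalProjectionOnto g : H)‖} :=
    ⟨0, by rintro r ⟨g, -, -, rfl⟩; positivity⟩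
  have h1 : cosAngleP T U ≤ ‖(U.orthogonalProjectionOnto ((‖g‖:ℂ)⁻¹ • g) : H)‖ :=
    csInf_le hbdd hmem
  have h2 : ‖(U.orthogonalProjectionOnto ((‖g‖:ℂ)⁻¹ • g) : H)‖
      = ‖g‖⁻¹ * ‖(U.orthogonalProjectionOnto g : H)‖ := by
    rw [map_smul]
    push_cast [Submodule.coe_smul, norm_smul]
    simp
  rw [h2] at h1
  calc cosAngleP T U * ‖g‖ ≤ (‖g‖⁻¹ * ‖(U.orthogonalProjectionOnto g : H)‖) * ‖g‖ :=
        mul_le_mul_of_nonneg_right h1 hg0.le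
    _ = ‖(U.orthogonalProjectionOnto g : H)‖ := by field_simp

/-- If `cos(φ_{T,U}) > 0`, then for every frame `(u_j)` for `U` with bounds
`A, B`, the projected sequence `(P_T u_j)` is a frame for `T` with bounds
`A·cos²(φ_{T,U})` and `B`. -/
theorem projected_frame
    {H : Type} [NormedAddCommGroup H] [InnerProductSpace ℂ H] [CompleteSpace H]
    (T U : Submodule ℂ H) [CompleteSpace T] [CompleteSpace U]
    (hangle : 0 < cosAngleP T U)
    (u : ℕ → H) (A B : ℝ) (hA : 0 < A) (hAB : A ≤ B)
    (hframe : IsFrameFor u U A B) :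
    IsFrameFor (fun j => (T.orthogonalProjectionOnto (u j) : H)) T
      (A * cosAngleP T U ^ 2) B := by
  obtain ⟨huU, hfr⟩ := hframe
  refine ⟨fun j => (T.orthogonalProjectionOnto (u j)).2, fun f hf => ?_⟩
  set c := cosAngleP T U
  set g : H := (U.orthogonalProjectionOnto f : H)
  have hPTf : (T.orthogonalProjectionOnto f : H) = f := Submodule.starProjection_eq_self_iff.mpr hf
  have hinner : ∀ j, ⟪(T.orthogonalProjectionOnto (u j) : H), f⟫_ℂ = ⟪u j, g⟫_ℂ := by
    intro j
    show ⟪T.starProjection (u j), f⟫_ℂ = ⟪u j, U.starProjection f⟫_ℂ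
    rw [Submodule.inner_starProjection_left_eq_right, Submodule.starProjection_eq_self_iff.mpr hf,
      ← Submodule.inner_starProjection_left_eq_right,
      Submodule.starProjection_eq_self_iff.mpr (huU j)]
  have hsum : (∑' j, ‖⟪(fun j => (T.orthogonalProjectionOnto (u j) : H)) j, f⟫_ℂ‖ ^ 2)
      = ∑' j, ‖⟪u j, g⟫_ℂ‖ ^ 2 := by
    simp only [hinner]
  obtain ⟨hlo, hhi⟩ := hfr g (U.orthogonalProjectionOnto f).2
  have hgle : ‖g‖ ≤ ‖f‖ := by
    calc ‖g‖ ≤ ‖U.orthogonalProjectionOnto‖ * ‖f‖ := U.orthogonalProjectionOnto.le_opNorm f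
      _ ≤ 1 * ‖f‖ := by
        exact mul_le_mul_of_nonneg_right (Submodule.orthogonalProjectionOnto_norm_le U) (norm_nonneg f)
      _ = ‖f‖ := one_mul _
  have hcf : c * ‖f‖ ≤ ‖g‖ := cosAngleP_mul_norm_le T U hf
  constructor
  · rw [hsum]
    refine le_trans ?_ hlo
    have hsq : (c * ‖f‖) ^ 2 ≤ ‖g‖ ^ 2 := by
      apply sq_le_sq' _ hcf
      nlinarith [norm_nonneg f, norm_nonneg g, hangle.le]
    nlinarith
  · rw [hsum]
    refine le_trans hhi ?_
    have hB : 0 ≤ B := le_trans hA.le hAB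
    have : ‖g‖ ^ 2 ≤ ‖f‖ ^ 2 := pow_le_pow_left₀ (norm_nonneg g) hgle 2
    nlinarith

end
end

section
/- Let T, U be closed subspaces of a Hilbert space H with cos(φ_{T,U}) > 0, (u_j) a frame for U with synthesis operator U and (t_k) a frame for T with synthesis operator T. Then the range of T*U equals the range of T*; consequently the ranges of T*U and U*T are closed subspaces of ℓ². -/
noncomputable section
open scoped InnerProductSpace ENNReal

open scoped ComplexConjugate NNReal


lemma lp2_norm_sq (x : Lp2) : ‖x‖ ^ 2 = ∑' j, ‖x j‖ ^ 2 := by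
  have h : (0:ℝ) < (2 : ℝ≥0∞).toReal := by norm_num
  have h2 : ∀ a : ℝ, a ^ ((2:ℝ≥0∞)).toReal = a ^ 2 := fun a => by
    rw [show ((2:ℝ≥0∞)).toReal = ((2:ℕ):ℝ) by simp, Real.rpow_natCast]
  have := lp.norm_rpow_eq_tsum h x
  simp only [h2] at this
  exact this

lemma syn_star_adj {H : Type} [NormedAddCommGroup H] [InnerProductSpace ℂ H]
    (u : ℕ → H)
    (Usyn : Lp2 →L[ℂ] H) (hUsyn : ∀ j, Usyn (lp.single 2 j 1) = u j)
    (Ustar : H →L[ℂ] Lp2) (hUstar : ∀ f j, Ustar f j = ⟪u j, f⟫_ℂ)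
    (c : Lp2) (f : H) : ⟪Usyn c, f⟫_ℂ = ⟪c, Ustar f⟫_ℂ := by
  have hc : HasSum (fun j => lp.single 2 j (c j)) c :=
    lp.hasSum_single (by norm_num) c
  have h1 : HasSum (fun j => ⟪f, Usyn (lp.single 2 j (c j))⟫_ℂ) ⟪f, Usyn c⟫_ℂ :=
    hc.mapL ((innerSL ℂ f).comp Usyn)
  have h2 : HasSum (fun j => conj ⟪f, Usyn (lp.single 2 j (c j))⟫_ℂ)
      (conj ⟪f, Usyn c⟫_ℂ) :=
    h1.map (starRingEnd ℂ).toAddMonoidHom continuous_star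
  have hterm : ∀ j, conj ⟪f, Usyn (lp.single 2 j (c j))⟫_ℂ = ⟪c j, (Ustar f) j⟫_ℂ := by
    intro j
    have hsingle : lp.single 2 j (c j) = c j • (lp.single 2 j (1:ℂ) : Lp2) := by
      rw [← lp.single_smul, smul_eq_mul, mul_one]
    rw [inner_conj_symm, hsingle, map_smul, hUsyn, inner_smul_left, hUstar,
      RCLike.inner_apply, mul_comm]
  rw [inner_conj_symm] at h2
  simp only [hterm] at h2
  exact h2.unique (lp.hasSum_inner c (Ustar f))

lemma surjective_of_coercive {E : Type} [NormedAddCommGroup E] [InnerProductSpace ℂ E]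
    [CompleteSpace E] (F : E →L[ℂ] E) {c : ℝ} (hc : 0 < c)
    (hF : ∀ x, c * ‖x‖ ^ 2 ≤ ‖⟪F x, x⟫_ℂ‖) : Function.Surjective F := by
  have hlow : ∀ x, c * ‖x‖ ≤ ‖F x‖ := by
    intro x
    rcases eq_or_ne x 0 with rfl | hx
    · simp
    have h1 := hF x
    have h2 : ‖⟪F x, x⟫_ℂ‖ ≤ ‖F x‖ * ‖x‖ := norm_inner_le_norm _ _
    have hxpos : 0 < ‖x‖ := norm_pos_iff.mpr hx
    nlinarith
  have hanti : AntilipschitzWith (⟨c, hc.le⟩ : ℝ≥0)⁻¹ F := by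
    refine F.antilipschitz_of_bound fun x => ?_
    show ‖x‖ ≤ c⁻¹ * ‖F x‖
    rw [inv_mul_eq_div, le_div_iff₀ hc]
    linarith [hlow x]
  have hclosed : IsClosed (Set.range F) := hanti.isClosed_range F.uniformContinuous
  have hclosed' : IsClosed ((LinearMap.range (F : E →ₗ[ℂ] E) : Submodule ℂ E) : Set E) := by
    rwa [show ((LinearMap.range (F : E →ₗ[ℂ] E) : Submodule ℂ E) : Set E) = Set.range F from
      LinearMap.coe_range _]
  haveI : CompleteSpace (LinearMap.range (F : E →ₗ[ℂ] E) : Submodule ℂ E) := hclosed'.completeSpace_coe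
  have horth : (LinearMap.range (F : E →ₗ[ℂ] E) : Submodule ℂ E)ᗮ = ⊥ := by
    rw [Submodule.eq_bot_iff]
    intro x hx
    have h0 : ⟪F x, x⟫_ℂ = 0 :=
      (Submodule.mem_orthogonal _ x).mp hx (F x) (LinearMap.mem_range_self _ x)
    have h1 := hF x
    rw [h0, norm_zero] at h1
    by_contra hne
    have hxpos : 0 < ‖x‖ := norm_pos_iff.mpr hne
    linarith [mul_pos hc (pow_pos hxpos 2)]
  have : (LinearMap.range (F : E →ₗ[ℂ] E) : Submodule ℂ E) = ⊤ :=
    Submodule.orthogonal_eq_bot_iff.mp horth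
  exact LinearMap.range_eq_top.mp this

lemma star_proj {H : Type} [NormedAddCommGroup H] [InnerProductSpace ℂ H] [CompleteSpace H]
    (U : Submodule ℂ H) [CompleteSpace U] (u : ℕ → H) (hu : ∀ j, u j ∈ U)
    (Ustar : H →L[ℂ] Lp2) (hUstar : ∀ f j, Ustar f j = ⟪u j, f⟫_ℂ) (f : H) :
    Ustar f = Ustar (U.orthogonalProjectionOnto f) := by
  apply lp.ext; funext j
  show Ustar f j = Ustar (U.orthogonalProjectionOnto f) j
  rw [hUstar, hUstar]
  have hperp : f - U.orthogonalProjectionOnto f ∈ Uᗮ :=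
    Submodule.sub_starProjection_mem_orthogonal (K := U) f
  have h0 : ⟪u j, f - (U.orthogonalProjectionOnto f : H)⟫_ℂ = 0 :=
    (Submodule.mem_orthogonal U _).mp hperp (u j) (hu j)
  rw [inner_sub_right, sub_eq_zero] at h0
  exact h0

lemma closed_image_of_lower {H : Type} [NormedAddCommGroup H] [InnerProductSpace ℂ H]
    (T : Submodule ℂ H) [CompleteSpace T] (Φ : H →L[ℂ] Lp2) {c : ℝ} (hc : 0 < c)
    (hlow : ∀ g ∈ T, c * ‖g‖ ^ 2 ≤ ‖Φ g‖ ^ 2) : IsClosed (Φ '' (T : Set H)) := by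
  set φ : T →L[ℂ] Lp2 := Φ.comp T.subtypeL with hφ
  have hsq : 0 < Real.sqrt c := Real.sqrt_pos.mpr hc
  have hbound : ∀ x : T, ‖x‖ ≤ (⟨(Real.sqrt c)⁻¹, by positivity⟩ : ℝ≥0) * ‖φ x‖ := by
    intro x
    have h1 : c * ‖(x : H)‖ ^ 2 ≤ ‖Φ (x : H)‖ ^ 2 := hlow _ x.2
    have h2 : Real.sqrt c * ‖(x : H)‖ ≤ ‖Φ (x : H)‖ := by
      have := Real.sqrt_le_sqrt h1
      rwa [Real.sqrt_mul hc.le, Real.sqrt_sq (norm_nonneg _), Real.sqrt_sq (norm_nonneg _)]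
        at this
    have hx : ‖x‖ = ‖(x : H)‖ := rfl
    have hφx : ‖φ x‖ = ‖Φ (x : H)‖ := rfl
    show ‖(x : H)‖ ≤ (Real.sqrt c)⁻¹ * ‖Φ (x : H)‖
    rw [inv_mul_eq_div, le_div_iff₀ hsq]
    linarith
  have hanti : AntilipschitzWith _ φ := φ.antilipschitz_of_bound hbound
  have hclosed : IsClosed (Set.range φ) := hanti.isClosed_range φ.uniformContinuous
  have : Set.range ⇑φ = Φ '' (T : Set H) := by
    ext x
    constructor
    · rintro ⟨g, rfl⟩; exact ⟨g, g.2, rfl⟩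
    · rintro ⟨g, hg, rfl⟩; exact ⟨⟨g, hg⟩, rfl⟩
  rwa [this] at hclosed

lemma star_norm_sq {H : Type} [NormedAddCommGroup H] [InnerProductSpace ℂ H]
    (u : ℕ → H) (Ustar : H →L[ℂ] Lp2) (hUstar : ∀ f j, Ustar f j = ⟪u j, f⟫_ℂ) (f : H) :
    ‖Ustar f‖ ^ 2 = ∑' j, ‖⟪u j, f⟫_ℂ‖ ^ 2 := by
  rw [lp2_norm_sq]
  exact tsum_congr fun j => by rw [hUstar]

lemma frame_synthesis_range {H : Type} [NormedAddCommGroup H] [InnerProductSpace ℂ H]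
    [CompleteSpace H] (U : Submodule ℂ H) [CompleteSpace U]
    (u : ℕ → H) (A B : ℝ) (hA : 0 < A) (hframe : IsFrameFor u U A B)
    (Usyn : Lp2 →L[ℂ] H) (hUsyn : ∀ j, Usyn (lp.single 2 j 1) = u j)
    (Ustar : H →L[ℂ] Lp2) (hUstar : ∀ f j, Ustar f j = ⟪u j, f⟫_ℂ) :
    Set.range Usyn = (U : Set H) := by
  have hadj : ∀ c f, ⟪Usyn c, f⟫_ℂ = ⟪c, Ustar f⟫_ℂ :=
    syn_star_adj u Usyn hUsyn Ustar hUstar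
  -- range Usyn ⊆ U
  have hstar0 : ∀ w ∈ Uᗮ, Ustar w = 0 := by
    intro w hw
    apply lp.ext; funext j
    show Ustar w j = 0
    rw [hUstar]
    exact (Submodule.mem_orthogonal U w).mp hw (u j) (hframe.1 j)
  have hsub : ∀ c, Usyn c ∈ U := by
    intro c
    rw [← Submodule.orthogonal_orthogonal U]
    intro w hw
    rw [← inner_conj_symm, hadj, hstar0 w hw, inner_zero_right, map_zero]
  -- the frame operator on U is coercive, hence surjective
  set S : U →L[ℂ] U :=
    (U.orthogonalProjectionOnto).comp ((Usyn.comp Ustar).comp U.subtypeL) with hS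
  have hScoe : ∀ g : U, (S g : H) = Usyn (Ustar (g : H)) := by
    intro g
    show (U.orthogonalProjectionOnto (Usyn (Ustar (g : H))) : H) = _
    exact Submodule.starProjection_eq_self_iff.mpr (hsub _)
  have hScoer : ∀ g : U, A * ‖g‖ ^ 2 ≤ ‖⟪S g, g⟫_ℂ‖ := by
    intro g
    have h1 : ⟪S g, g⟫_ℂ = ⟪Ustar (g : H), Ustar (g : H)⟫_ℂ := by
      rw [Submodule.coe_inner, hScoe, hadj]
    have h2 : ‖⟪Ustar (g : H), Ustar (g : H)⟫_ℂ‖ = ‖Ustar (g : H)‖ ^ 2 := by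
      rw [inner_self_eq_norm_sq_to_K, norm_pow, RCLike.norm_ofReal,
        abs_of_nonneg (norm_nonneg _)]
    rw [h1, h2, star_norm_sq u Ustar hUstar]
    have := (hframe.2 (g : H) g.2).1
    rwa [show ‖(g : H)‖ = ‖g‖ from rfl] at this
  have hSsurj : Function.Surjective S := surjective_of_coercive S hA hScoer
  apply Set.Subset.antisymm
  · rintro x ⟨c, rfl⟩; exact hsub c
  · intro h hh
    obtain ⟨g, hg⟩ := hSsurj ⟨h, hh⟩
    refine ⟨Ustar (g : H), ?_⟩
    have : (S g : H) = h := by rw [hg]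
    rwa [hScoe] at this

/-- If `cos(φ_{T,U}) > 0` then `R(T*U) = R(T*)`; consequently the ranges of
`T*U` and `U*T` are closed subspaces of `ℓ²`. -/
theorem range_cross_gramian
    {H : Type} [NormedAddCommGroup H] [InnerProductSpace ℂ H] [CompleteSpace H]
    (T U : Submodule ℂ H) [CompleteSpace T] [CompleteSpace U]
    (hangle : 0 < cosAngleP T U)
    (u : ℕ → H) (A B : ℝ) (hA : 0 < A) (hAB : A ≤ B) (hframe : IsFrameFor u U A B)
    (t : ℕ → H) (C D : ℝ) (hC : 0 < C) (hCD : C ≤ D) (htframe : IsFrameFor t T C D)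
    (Usyn : Lp2 →L[ℂ] H) (hUsyn : ∀ j, Usyn (lp.single 2 j 1) = u j)
    (Ustar : H →L[ℂ] Lp2) (hUstar : ∀ f j, Ustar f j = ⟪u j, f⟫_ℂ)
    (Tsyn : Lp2 →L[ℂ] H) (hTsyn : ∀ k, Tsyn (lp.single 2 k 1) = t k)
    (Tstar : H →L[ℂ] Lp2) (hTstar : ∀ f k, Tstar f k = ⟪t k, f⟫_ℂ) :
    LinearMap.range (Tstar.comp Usyn : Lp2 →ₗ[ℂ] Lp2) = LinearMap.range (Tstar : H →ₗ[ℂ] Lp2) ∧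
      IsClosed ((LinearMap.range (Tstar.comp Usyn : Lp2 →ₗ[ℂ] Lp2) : Submodule ℂ Lp2) : Set Lp2) ∧
      IsClosed ((LinearMap.range (Ustar.comp Tsyn : Lp2 →ₗ[ℂ] Lp2) : Submodule ℂ Lp2) : Set Lp2) := by
  -- Step A: the angle bound
  have hbddset : BddBelow {r : ℝ | ∃ g ∈ T, ‖g‖ = 1 ∧ r = ‖(U.orthogonalProjectionOnto g : H)‖} :=
    ⟨0, by rintro r ⟨g, -, -, rfl⟩; exact norm_nonneg _⟩
  have hPUlow : ∀ g ∈ T, cosAngleP T U * ‖g‖ ≤ ‖(U.orthogonalProjectionOnto g : H)‖ := by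
    intro g hg
    rcases eq_or_ne g 0 with rfl | hg0
    · simp
    have hgpos : 0 < ‖g‖ := norm_pos_iff.mpr hg0
    have hnormc : ‖((‖g‖⁻¹ : ℝ) : ℂ)‖ = ‖g‖⁻¹ := by
      simp [Real.norm_eq_abs, abs_of_nonneg (inv_nonneg.mpr (norm_nonneg g))]
    have hmem : ‖(U.orthogonalProjectionOnto (((‖g‖⁻¹ : ℝ) : ℂ) • g) : H)‖ ∈
        {r : ℝ | ∃ g ∈ T, ‖g‖ = 1 ∧ r = ‖(U.orthogonalProjectionOnto g : H)‖} := by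
      refine ⟨((‖g‖⁻¹ : ℝ) : ℂ) • g, T.smul_mem _ hg, ?_, rfl⟩
      rw [norm_smul, hnormc, inv_mul_cancel₀ hgpos.ne']
    have hle := csInf_le hbddset hmem
    rw [map_smul] at hle
    have hcoe : ((((‖g‖⁻¹ : ℝ) : ℂ) • U.orthogonalProjectionOnto g : U) : H)
        = ((‖g‖⁻¹ : ℝ) : ℂ) • (U.orthogonalProjectionOnto g : H) := rfl
    rw [hcoe, norm_smul, hnormc] at hle
    have h2 := mul_le_mul_of_nonneg_right hle hgpos.le
    have h3 : ‖g‖⁻¹ * ‖(U.orthogonalProjectionOnto g : H)‖ * ‖g‖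
        = ‖(U.orthogonalProjectionOnto g : H)‖ := by field_simp
    unfold cosAngleP
    linarith [h3 ▸ h2]
  -- ranges of synthesis operators
  have hUrange : Set.range ⇑Usyn = (U : Set H) :=
    frame_synthesis_range U u A B hA hframe Usyn hUsyn Ustar hUstar
  have hTrange : Set.range ⇑Tsyn = (T : Set H) :=
    frame_synthesis_range T t C D hC htframe Tsyn hTsyn Tstar hTstar
  have hTproj : ∀ f, Tstar f = Tstar (T.orthogonalProjectionOnto f) :=
    star_proj T t htframe.1 Tstar hTstar
  have hUproj : ∀ f, Ustar f = Ustar (U.orthogonalProjectionOnto f) :=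
    star_proj U u hframe.1 Ustar hUstar
  -- Step F: the operator P_T ∘ P_U on T is coercive, hence surjective
  set F : T →L[ℂ] T :=
    (T.orthogonalProjectionOnto).comp ((U.subtypeL.comp (U.orthogonalProjectionOnto)).comp T.subtypeL)
    with hF
  have hFcoer : ∀ g : T, (cosAngleP T U) ^ 2 * ‖g‖ ^ 2 ≤ ‖⟪F g, g⟫_ℂ‖ := by
    intro g
    set y : H := (U.orthogonalProjectionOnto (g : H) : H) with hy
    have key : ⟪F g, g⟫_ℂ = ⟪y, y⟫_ℂ := by
      rw [Submodule.coe_inner]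
      have e1 : ((F g : T) : H) = T.starProjection y := rfl
      rw [e1, Submodule.inner_starProjection_left_eq_right,
        Submodule.starProjection_eq_self_iff.mpr g.2]
      have hperp : (g : H) - y ∈ Uᗮ := Submodule.sub_starProjection_mem_orthogonal (K := U) _
      have h0 : ⟪y, (g : H) - y⟫_ℂ = 0 :=
        (Submodule.mem_orthogonal U _).mp hperp y (U.orthogonalProjectionOnto (g : H)).2
      rw [inner_sub_right, sub_eq_zero] at h0
      exact h0
    have hnn : ‖⟪y, y⟫_ℂ‖ = ‖y‖ ^ 2 := by
      rw [inner_self_eq_norm_sq_to_K, norm_pow, RCLike.norm_ofReal,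
        abs_of_nonneg (norm_nonneg _)]
    rw [key, hnn]
    have h1 := hPUlow (g : H) g.2
    have hgn : ‖g‖ = ‖(g : H)‖ := rfl
    rw [hgn]
    rw [← hy] at h1
    have h4 : (cosAngleP T U * ‖(g : H)‖) ^ 2 ≤ ‖y‖ ^ 2 :=
      pow_le_pow_left₀ (mul_nonneg hangle.le (norm_nonneg _)) h1 2
    nlinarith [h4]
  have hFsurj : Function.Surjective F :=
    surjective_of_coercive F (pow_pos hangle 2) hFcoer
  -- main equality
  have hmain : LinearMap.range (Tstar.comp Usyn : Lp2 →ₗ[ℂ] Lp2) = LinearMap.range (Tstar : H →ₗ[ℂ] Lp2) := by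
    apply le_antisymm
    · rintro x ⟨c, rfl⟩
      exact ⟨Usyn c, rfl⟩
    · rintro x ⟨f, rfl⟩
      obtain ⟨g, hg⟩ := hFsurj (T.orthogonalProjectionOnto f)
      set y : H := (U.orthogonalProjectionOnto (g : H) : H) with hy
      have hyU : y ∈ U := (U.orthogonalProjectionOnto (g : H)).2
      obtain ⟨c, hc⟩ : ∃ c, Usyn c = y := by
        have : y ∈ Set.range ⇑Usyn := hUrange ▸ hyU
        exact this
      refine ⟨c, ?_⟩
      show Tstar (Usyn c) = Tstar f
      rw [hc, hTproj y]
      have e2 : ((T.orthogonalProjectionOnto y : T) : H) = ((F g : T) : H) := rfl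
      rw [e2, hg]
      exact (hTproj f).symm
  -- closedness of R(T*)
  have hTset : ((LinearMap.range (Tstar : H →ₗ[ℂ] Lp2) : Submodule ℂ Lp2) : Set Lp2)
      = ⇑Tstar '' (T : Set H) := by
    ext x
    simp only [SetLike.mem_coe, LinearMap.mem_range, ContinuousLinearMap.coe_coe,
      Set.mem_image]
    constructor
    · rintro ⟨f, rfl⟩
      exact ⟨(T.orthogonalProjectionOnto f : H), (T.orthogonalProjectionOnto f).2, (hTproj f).symm⟩
    · rintro ⟨g, hg, rfl⟩
      exact ⟨g, rfl⟩
  have hclosed1 : IsClosed ((LinearMap.range (Tstar : H →ₗ[ℂ] Lp2) : Submodule ℂ Lp2) : Set Lp2) := by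
    rw [hTset]
    refine closed_image_of_lower T Tstar hC ?_
    intro g hg
    rw [star_norm_sq t Tstar hTstar]
    exact (htframe.2 g hg).1
  -- closedness of R(U*T)
  have hUTset : ((LinearMap.range (Ustar.comp Tsyn : Lp2 →ₗ[ℂ] Lp2) : Submodule ℂ Lp2) : Set Lp2)
      = ⇑Ustar '' (T : Set H) := by
    ext x
    simp only [SetLike.mem_coe, LinearMap.mem_range, ContinuousLinearMap.coe_coe,
      ContinuousLinearMap.comp_apply, Set.mem_image]
    constructor
    · rintro ⟨c, rfl⟩
      have hmem : Tsyn c ∈ T := by rw [← SetLike.mem_coe, ← hTrange]; exact ⟨c, rfl⟩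
      exact ⟨Tsyn c, hmem, rfl⟩
    · rintro ⟨g, hg, rfl⟩
      obtain ⟨c, hc⟩ : ∃ c, Tsyn c = g := by
        have : g ∈ Set.range ⇑Tsyn := hTrange ▸ hg
        exact this
      exact ⟨c, by rw [hc]⟩
  have hclosed2 : IsClosed ((LinearMap.range (Ustar.comp Tsyn : Lp2 →ₗ[ℂ] Lp2) : Submodule ℂ Lp2) : Set Lp2) := by
    rw [hUTset]
    refine closed_image_of_lower T Ustar (mul_pos hA (pow_pos hangle 2)) ?_
    intro g hg
    have h1 : ‖Ustar g‖ ^ 2 = ∑' j, ‖⟪u j, ((U.orthogonalProjectionOnto g : U) : H)⟫_ℂ‖ ^ 2 := by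
      rw [hUproj g, star_norm_sq u Ustar hUstar]
    have h2 := (hframe.2 _ (U.orthogonalProjectionOnto g).2).1
    have h3 := hPUlow g hg
    have h4 : (cosAngleP T U * ‖g‖) ^ 2 ≤ ‖((U.orthogonalProjectionOnto g : U) : H)‖ ^ 2 :=
      pow_le_pow_left₀ (mul_nonneg hangle.le (norm_nonneg g)) h3 2
    rw [h1]
    nlinarith [hA.le]
  exact ⟨hmain, by rw [hmain]; exact hclosed1, hclosed2⟩
end
end

section
/- Let (u_j) be a Bessel sequence spanning a closed subspace U of H with analysis operator U*, and T a closed subspace. If Q: ℓ² → T is a bounded operator with QU*g = g for all g ∈ T, then (P_T u_j) is a frame for T and the sequence (h_j) defined by h_j = Q e_j (e_j the standard basis of ℓ²) is a dual frame of (P_T u_j) in T. -/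
noncomputable section
open scoped InnerProductSpace ENNReal

/-- If `Q : ℓ² → T` is bounded with `QU*g = g` for `g ∈ T`, then
`(P_T u_j)` is a frame for `T` and `(h_j) = (Q e_j)` is a dual frame of `(P_T u_j)`
in `T`, i.e. `g = Σ_j ⟨g, P_T u_j⟩ h_j` for all `g ∈ T`. -/
theorem dual_frame_of_perfect_operator
    {H : Type} [NormedAddCommGroup H] [InnerProductSpace ℂ H] [CompleteSpace H]
    (T U : Submodule ℂ H) [CompleteSpace T]
    (u : ℕ → H) (hspan : U = (Submodule.span ℂ (Set.range u)).topologicalClosure)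
    (B : ℝ) (hBessel : ∀ f : H, ∑' j, ‖⟪u j, f⟫_ℂ‖ ^ 2 ≤ B * ‖f‖ ^ 2)
    (Ustar : H →L[ℂ] Lp2) (hUstar : ∀ f j, Ustar f j = ⟪u j, f⟫_ℂ)
    (Q : Lp2 →L[ℂ] H) (hQT : ∀ c, Q c ∈ T)
    (hperfect : ∀ g ∈ T, Q (Ustar g) = g) :
    (∃ A' B' : ℝ, 0 < A' ∧ A' ≤ B' ∧
      IsFrameFor (fun j => (T.orthogonalProjectionOnto (u j) : H)) T A' B') ∧
    (∀ j, Q (lp.single 2 j 1) ∈ T) ∧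
    (∀ g ∈ T, HasSum
      (fun j => ⟪(T.orthogonalProjectionOnto (u j) : H), g⟫_ℂ • Q (lp.single 2 j 1)) g) := by
  -- key inner-product identity
  have key : ∀ g ∈ T, ∀ j, ⟪(T.orthogonalProjectionOnto (u j) : H), g⟫_ℂ = ⟪u j, g⟫_ℂ := by
    intro g hg j
    rw [← Submodule.starProjection_apply, Submodule.inner_starProjection_left_eq_right,
      Submodule.starProjection_eq_self_iff.mpr hg]
  refine ⟨?_, fun j => hQT _, ?_⟩
  · -- frame bounds
    set C : ℝ := max ‖Q‖ 1 with hC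
    have hC1 : (1 : ℝ) ≤ C := le_max_right _ _
    have hC0 : 0 < C := lt_of_lt_of_le one_pos hC1
    refine ⟨(C ^ 2)⁻¹, max B (C ^ 2)⁻¹, by positivity, le_max_right _ _,
      fun j => Submodule.coe_mem _, fun g hg => ?_⟩
    have hsum : ∑' j, ‖⟪(T.orthogonalProjectionOnto (u j) : H), g⟫_ℂ‖ ^ 2
        = ∑' j, ‖⟪u j, g⟫_ℂ‖ ^ 2 := by
      exact tsum_congr fun j => by rw [key g hg j]
    rw [hsum]
    constructor
    · -- lower bound
      have hnorm2 : ‖Ustar g‖ ^ 2 = ∑' j, ‖⟪u j, g⟫_ℂ‖ ^ 2 := by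
        have h0 := lp.norm_rpow_eq_tsum (p := 2) (E := fun _ : ℕ => ℂ) (by norm_num) (Ustar g)
        have h1 : ‖Ustar g‖ ^ ((2 : ℝ≥0∞).toReal) = ‖Ustar g‖ ^ (2 : ℕ) := by
          rw [ENNReal.toReal_ofNat, Real.rpow_two]
        have h2 : ∀ j : ℕ, ‖Ustar g j‖ ^ ((2 : ℝ≥0∞).toReal) = ‖⟪u j, g⟫_ℂ‖ ^ (2 : ℕ) := by
          intro j
          rw [ENNReal.toReal_ofNat, Real.rpow_two, hUstar g j]
        rw [← h1, h0]
        exact tsum_congr h2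
      have hg1 : ‖g‖ ≤ C * ‖Ustar g‖ := by
        calc ‖g‖ = ‖Q (Ustar g)‖ := by rw [hperfect g hg]
          _ ≤ ‖Q‖ * ‖Ustar g‖ := Q.le_opNorm _
          _ ≤ C * ‖Ustar g‖ :=
              mul_le_mul_of_nonneg_right (le_max_left _ _) (norm_nonneg _)
      have hg2 : ‖g‖ ^ 2 ≤ C ^ 2 * ‖Ustar g‖ ^ 2 := by
        calc ‖g‖ ^ 2 ≤ (C * ‖Ustar g‖) ^ 2 := pow_le_pow_left₀ (norm_nonneg _) hg1 2
          _ = C ^ 2 * ‖Ustar g‖ ^ 2 := by ring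
      rw [← hnorm2]
      rw [inv_mul_le_iff₀ (by positivity)]
      linarith [hg2]
    · -- upper bound
      calc ∑' j, ‖⟪u j, g⟫_ℂ‖ ^ 2 ≤ B * ‖g‖ ^ 2 := hBessel g
        _ ≤ max B (C ^ 2)⁻¹ * ‖g‖ ^ 2 :=
            mul_le_mul_of_nonneg_right (le_max_left _ _) (by positivity)
  · -- dual frame expansion
    intro g hg
    have h1 : HasSum (fun j => lp.single 2 j (Ustar g j)) (Ustar g) :=
      lp.hasSum_single (by norm_num) (Ustar g)
    have h2 : HasSum (fun j => Q (lp.single 2 j (Ustar g j))) g := by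
      have := h1.mapL Q
      rwa [hperfect g hg] at this
    refine h2.congr_fun fun j => ?_
    rw [key g hg j, ← hUstar g j]
    have : lp.single (E := fun _ : ℕ => ℂ) 2 j (Ustar g j)
        = (Ustar g j) • lp.single 2 j 1 := by
      rw [← lp.single_smul, smul_eq_mul, mul_one]
    rw [this, map_smul]
end
end

section
/- Let T and W be closed subspaces of a Hilbert space H with cos(φ_{T,W^⊥}) > 0, let H₁ = T ⊕ W and P_{T,W}: H₁ → T the oblique projection with range T and kernel W. Then for every f ∈ H₁, ‖f − P_T f‖ ≤ ‖f − P_{T,W} f‖ ≤ (1/cos(φ_{T,W^⊥})) ‖f − P_T f‖. -/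
set_option maxHeartbeats 1000000
set_option synthInstance.maxHeartbeats 400000

noncomputable section
open scoped InnerProductSpace ENNReal

section Aux

variable {H : Type} [NormedAddCommGroup H] [InnerProductSpace ℂ H] [CompleteSpace H]

/-- Every element of the defining set of `cosAngleS` is nonnegative. -/
lemma cosAngleS_set_nonneg (T : Submodule ℂ H) (Y : Set H) :
    ∀ r ∈ {r : ℝ | ∃ g ∈ T, ‖g‖ = 1 ∧
      r = sSup {s : ℝ | ∃ v ∈ Y, ‖v‖ = 1 ∧ s = ‖⟪g, v⟫_ℂ‖}}, 0 ≤ r := by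
  rintro r ⟨g, hg, hgn, rfl⟩
  apply Real.sSup_nonneg
  rintro s ⟨v, hv, hvn, rfl⟩
  exact norm_nonneg _

lemma cosAngleS_bddBelow (T : Submodule ℂ H) (Y : Set H) :
    BddBelow {r : ℝ | ∃ g ∈ T, ‖g‖ = 1 ∧
      r = sSup {s : ℝ | ∃ v ∈ Y, ‖v‖ = 1 ∧ s = ‖⟪g, v⟫_ℂ‖}} :=
  ⟨0, fun r hr => cosAngleS_set_nonneg T Y r hr⟩

/-- `cosAngleS ≤ 1` as soon as it is positive (so the defining set is nonempty). -/
lemma cosAngleS_le_one (T : Submodule ℂ H) (Y : Set H)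
    (hangle : 0 < cosAngleS T Y) : cosAngleS T Y ≤ 1 := by
  have hne : {r : ℝ | ∃ g ∈ T, ‖g‖ = 1 ∧
      r = sSup {s : ℝ | ∃ v ∈ Y, ‖v‖ = 1 ∧ s = ‖⟪g, v⟫_ℂ‖}}.Nonempty := by
    by_contra h
    rw [Set.not_nonempty_iff_eq_empty] at h
    rw [cosAngleS, h, Real.sInf_empty] at hangle
    exact lt_irrefl 0 hangle
  obtain ⟨r, hr⟩ := hne
  refine le_trans (csInf_le (cosAngleS_bddBelow T Y) hr) ?_
  obtain ⟨g, hg, hgn, rfl⟩ := hr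
  apply Real.sSup_le _ zero_le_one
  rintro s ⟨v, hv, hvn, rfl⟩
  calc ‖⟪g, v⟫_ℂ‖ ≤ ‖g‖ * ‖v‖ := norm_inner_le_norm g v
  _ = 1 := by rw [hgn, hvn, one_mul]

/-- For `g ∈ T`, `cosAngleS T Wᗮ * ‖g‖ ≤ ‖P_{Wᗮ} g‖`. -/
lemma cosAngleS_mul_norm_le (T W : Submodule ℂ H) {g : H} (hg : g ∈ T) :
    cosAngleS T ((Wᗮ : Submodule ℂ H) : Set H) * ‖g‖ ≤
      ‖(Submodule.orthogonalProjectionOnto Wᗮ g : H)‖ := by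
  rcases eq_or_ne g 0 with rfl | hg0
  · simp
  have hgpos : (0:ℝ) < ‖g‖ := norm_pos_iff.2 hg0
  set g1 : H := ((‖g‖ : ℂ))⁻¹ • g with hg1
  have hg1T : g1 ∈ T := T.smul_mem _ hg
  have hg1n : ‖g1‖ = 1 := by
    rw [hg1, norm_smul, norm_inv, Complex.norm_real, Real.norm_eq_abs,
      abs_of_pos hgpos, inv_mul_cancel₀ (ne_of_gt hgpos)]
  have hmem : sSup {s : ℝ | ∃ v ∈ ((Wᗮ : Submodule ℂ H) : Set H), ‖v‖ = 1 ∧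
      s = ‖⟪g1, v⟫_ℂ‖} ∈ {r : ℝ | ∃ g' ∈ T, ‖g'‖ = 1 ∧
      r = sSup {s : ℝ | ∃ v ∈ ((Wᗮ : Submodule ℂ H) : Set H), ‖v‖ = 1 ∧ s = ‖⟪g', v⟫_ℂ‖}} :=
    ⟨g1, hg1T, hg1n, rfl⟩
  have h1 : cosAngleS T ((Wᗮ : Submodule ℂ H) : Set H) ≤
      sSup {s : ℝ | ∃ v ∈ ((Wᗮ : Submodule ℂ H) : Set H), ‖v‖ = 1 ∧ s = ‖⟪g1, v⟫_ℂ‖} :=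
    csInf_le (cosAngleS_bddBelow T _) hmem
  have h2 : sSup {s : ℝ | ∃ v ∈ ((Wᗮ : Submodule ℂ H) : Set H), ‖v‖ = 1 ∧
      s = ‖⟪g1, v⟫_ℂ‖} ≤ ‖(Submodule.orthogonalProjectionOnto Wᗮ g1 : H)‖ := by
    apply Real.sSup_le _ (norm_nonneg _)
    rintro s ⟨v, hv, hvn, rfl⟩
    have horth : ⟪g1 - (Submodule.orthogonalProjectionOnto Wᗮ g1 : H), v⟫_ℂ = 0 :=
      Submodule.inner_left_of_mem_orthogonal hv
        (Submodule.sub_starProjection_mem_orthogonal (K := Wᗮ) g1)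
    have : ⟪g1, v⟫_ℂ = ⟪(Submodule.orthogonalProjectionOnto Wᗮ g1 : H), v⟫_ℂ := by
      have := inner_sub_left (𝕜 := ℂ) g1 ((Submodule.orthogonalProjectionOnto Wᗮ g1 : H)) v
      rw [horth] at this
      linear_combination -this
    rw [this]
    calc ‖⟪(Submodule.orthogonalProjectionOnto Wᗮ g1 : H), v⟫_ℂ‖
        ≤ ‖(Submodule.orthogonalProjectionOnto Wᗮ g1 : H)‖ * ‖v‖ := norm_inner_le_norm _ _
      _ = ‖(Submodule.orthogonalProjectionOnto Wᗮ g1 : H)‖ := by rw [hvn, mul_one]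
  have hproj : (Submodule.orthogonalProjectionOnto Wᗮ g1 : H) =
      ((‖g‖ : ℂ))⁻¹ • (Submodule.orthogonalProjectionOnto Wᗮ g : H) := by
    rw [hg1, map_smul]
    rfl
  have hnorm : ‖(Submodule.orthogonalProjectionOnto Wᗮ g1 : H)‖ =
      ‖g‖⁻¹ * ‖(Submodule.orthogonalProjectionOnto Wᗮ g : H)‖ := by
    rw [hproj, norm_smul, norm_inv, Complex.norm_real, Real.norm_eq_abs, abs_of_pos hgpos]
  have := le_trans h1 h2
  rw [hnorm] at this
  calc cosAngleS T ((Wᗮ : Submodule ℂ H) : Set H) * ‖g‖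
      ≤ (‖g‖⁻¹ * ‖(Submodule.orthogonalProjectionOnto Wᗮ g : H)‖) * ‖g‖ := by
        exact mul_le_mul_of_nonneg_right this (le_of_lt hgpos)
    _ = ‖(Submodule.orthogonalProjectionOnto Wᗮ g : H)‖ := by
        field_simp

/-- The key estimate: for `w ∈ W`, `cosAngleS T Wᗮ * ‖w‖ ≤ ‖w - P_T w‖`. -/
lemma key_estimate (T W : Submodule ℂ H) [CompleteSpace T]
    (hangle : 0 < cosAngleS T ((Wᗮ : Submodule ℂ H) : Set H))
    {w : H} (hw : w ∈ W) :
    cosAngleS T ((Wᗮ : Submodule ℂ H) : Set H) * ‖w‖ ≤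
      ‖w - (Submodule.orthogonalProjectionOnto T w : H)‖ := by
  set c := cosAngleS T ((Wᗮ : Submodule ℂ H) : Set H) with hc
  have hc1 : c ≤ 1 := cosAngleS_le_one T _ hangle
  set g : H := (Submodule.orthogonalProjectionOnto T w : H) with hgdef
  set p : H := (Submodule.orthogonalProjectionOnto Wᗮ g : H) with hpdef
  have hgT : g ∈ T := SetLike.coe_mem _
  have hpW : p ∈ Wᗮ := SetLike.coe_mem (Submodule.orthogonalProjectionOnto Wᗮ g)
  have hwg : w - g ∈ Tᗮ := Submodule.sub_starProjection_mem_orthogonal (K := T) w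
  have hgp : g - p ∈ (Wᗮ)ᗮ := Submodule.sub_starProjection_mem_orthogonal (K := Wᗮ) g
  -- (a) ‖g‖² = re ⟪g, w⟫
  have ha : ‖g‖ ^ 2 = RCLike.re ⟪g, w⟫_ℂ := by
    have h0 : ⟪g, w - g⟫_ℂ = 0 := Submodule.inner_right_of_mem_orthogonal hgT hwg
    have : ⟪g, w⟫_ℂ = ⟪g, g⟫_ℂ + ⟪g, w - g⟫_ℂ := by
      rw [← inner_add_right, add_sub_cancel]
    rw [this, h0, add_zero, ← inner_self_eq_norm_sq (𝕜 := ℂ) g]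
  -- (b) ⟪p, w⟫ = 0
  have hb : ⟪p, w⟫_ℂ = 0 := Submodule.inner_left_of_mem_orthogonal hw hpW
  -- (c) ‖g‖² ≤ ‖g - p‖ * ‖w‖
  have hcineq : ‖g‖ ^ 2 ≤ ‖g - p‖ * ‖w‖ := by
    have : ⟪g, w⟫_ℂ = ⟪g - p, w⟫_ℂ := by
      rw [inner_sub_left, hb, sub_zero]
    rw [ha, this]
    exact re_inner_le_norm _ _
  -- (d) ‖g‖² = ‖p‖² + ‖g - p‖²  (Pythagoras)
  have hd : ‖g‖ ^ 2 = ‖p‖ ^ 2 + ‖g - p‖ ^ 2 := by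
    have h0 : RCLike.re ⟪p, g - p⟫_ℂ = 0 := by
      rw [Submodule.inner_right_of_mem_orthogonal hpW hgp]
      simp
    have : g = p + (g - p) := by abel
    calc ‖g‖ ^ 2 = ‖p + (g - p)‖ ^ 2 := by rw [← this]
      _ = ‖p‖ ^ 2 + 2 * RCLike.re ⟪p, g - p⟫_ℂ + ‖g - p‖ ^ 2 := norm_add_sq _ _
      _ = ‖p‖ ^ 2 + ‖g - p‖ ^ 2 := by rw [h0]; ring
  -- (e) c * ‖g‖ ≤ ‖p‖
  have he : c * ‖g‖ ≤ ‖p‖ := cosAngleS_mul_norm_le T W hgT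
  -- (f) ‖w‖² = ‖g‖² + ‖w - g‖²  (Pythagoras)
  have hf : ‖w‖ ^ 2 = ‖g‖ ^ 2 + ‖w - g‖ ^ 2 := by
    have h0 : RCLike.re ⟪g, w - g⟫_ℂ = 0 := by
      rw [Submodule.inner_right_of_mem_orthogonal hgT hwg]
      simp
    have : w = g + (w - g) := by abel
    calc ‖w‖ ^ 2 = ‖g + (w - g)‖ ^ 2 := by rw [← this]
      _ = ‖g‖ ^ 2 + 2 * RCLike.re ⟪g, w - g⟫_ℂ + ‖w - g‖ ^ 2 := norm_add_sq _ _
      _ = ‖g‖ ^ 2 + ‖w - g‖ ^ 2 := by rw [h0]; ring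
  -- combine: ‖g‖² ≤ (1 - c²) * ‖w‖²
  have hsq : ‖g‖ ^ 2 ≤ (1 - c ^ 2) * ‖w‖ ^ 2 := by
    rcases eq_or_ne ‖g‖ 0 with hg0 | hg0
    · rw [hg0]
      have h1 : 0 ≤ 1 - c ^ 2 := by nlinarith
      simpa using mul_nonneg h1 (sq_nonneg ‖w‖)
    · have hgpos : (0:ℝ) < ‖g‖ := lt_of_le_of_ne (norm_nonneg _) (Ne.symm hg0)
      have hp2 : c ^ 2 * ‖g‖ ^ 2 ≤ ‖p‖ ^ 2 := by
        have hcg : 0 ≤ c * ‖g‖ := mul_nonneg (le_of_lt hangle) (norm_nonneg _)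
        nlinarith
      have hgp2 : ‖g - p‖ ^ 2 ≤ (1 - c ^ 2) * ‖g‖ ^ 2 := by nlinarith
      -- ‖g‖⁴ ≤ ‖g-p‖² ‖w‖² ≤ (1-c²)‖g‖²‖w‖²
      have h4 : ‖g‖ ^ 4 ≤ (1 - c ^ 2) * ‖g‖ ^ 2 * ‖w‖ ^ 2 := by
        nlinarith [norm_nonneg (g - p), norm_nonneg w, sq_nonneg (‖g - p‖ * ‖w‖)]
      have hg2pos : (0:ℝ) < ‖g‖ ^ 2 := by positivity
      nlinarith
  -- conclude: (c‖w‖)² ≤ ‖w - g‖²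
  have hfinal : (c * ‖w‖) ^ 2 ≤ ‖w - g‖ ^ 2 := by nlinarith
  have hcw : 0 ≤ c * ‖w‖ := mul_nonneg (le_of_lt hangle) (norm_nonneg _)
  exact (pow_le_pow_iff_left₀ hcw (norm_nonneg _) (by norm_num)).1 hfinal

end Aux

/-- If `cos(φ_{T,W^⊥}) > 0` and `P_{T,W}` is the oblique projection of
`H₁ = T ⊕ W` onto `T` with kernel `W`, then for `f ∈ H₁`:
`‖f − P_T f‖ ≤ ‖f − P_{T,W} f‖ ≤ (1/cos(φ_{T,W^⊥})) ‖f − P_T f‖`. -/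
theorem oblique_projection_error_bounds
    {H : Type} [NormedAddCommGroup H] [InnerProductSpace ℂ H] [CompleteSpace H]
    (T W : Submodule ℂ H) [CompleteSpace T]
    (hangle : 0 < cosAngleS T ((Wᗮ : Submodule ℂ H) : Set H))
    (P : H →L[ℂ] H) (hP : ∀ t ∈ T, ∀ w ∈ W, P (t + w) = t) :
    ∀ f ∈ T ⊔ W,
      ‖f - (T.orthogonalProjectionOnto f : H)‖ ≤ ‖f - P f‖ ∧
      ‖f - P f‖ ≤ (1 / cosAngleS T ((Wᗮ : Submodule ℂ H) : Set H)) *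
        ‖f - (T.orthogonalProjectionOnto f : H)‖ := by
  intro f hf
  rw [Submodule.mem_sup] at hf
  obtain ⟨t, ht, w, hw, rfl⟩ := hf
  set c := cosAngleS T ((Wᗮ : Submodule ℂ H) : Set H) with hc
  have hPf : P (t + w) = t := hP t ht w hw
  set q : H := (Submodule.orthogonalProjectionOnto T (t + w) : H) with hq
  have hqT : q ∈ T := SetLike.coe_mem _
  have horth : (t + w) - q ∈ Tᗮ := Submodule.sub_starProjection_mem_orthogonal (K := T) (t + w)
  -- q = t + P_T w
  have hqeq : q = t + (Submodule.orthogonalProjectionOnto T w : H) := by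
    rw [hq, map_add]
    congr 1
    push_cast
    congr 1
    exact congrArg _ (Submodule.orthogonalProjectionOnto_mem_subspace_eq_self (K := T) ⟨t, ht⟩)
  have hdiff : (t + w) - q = w - (Submodule.orthogonalProjectionOnto T w : H) := by
    rw [hqeq]; abel
  constructor
  · -- first inequality
    rw [hPf]
    have hsplit : (t + w) - t = ((t + w) - q) + (q - t) := by abel
    have hqt : q - t ∈ T := T.sub_mem hqT ht
    have h0 : RCLike.re ⟪(t + w) - q, q - t⟫_ℂ = 0 := by
      rw [Submodule.inner_left_of_mem_orthogonal hqt horth]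
      simp
    have hpyth : ‖(t + w) - t‖ ^ 2 = ‖(t + w) - q‖ ^ 2 + ‖q - t‖ ^ 2 := by
      calc ‖(t + w) - t‖ ^ 2 = ‖((t + w) - q) + (q - t)‖ ^ 2 := by rw [← hsplit]
        _ = ‖(t + w) - q‖ ^ 2 + 2 * RCLike.re ⟪(t + w) - q, q - t⟫_ℂ + ‖q - t‖ ^ 2 :=
            norm_add_sq _ _
        _ = ‖(t + w) - q‖ ^ 2 + ‖q - t‖ ^ 2 := by rw [h0]; ring
    have hsq : ‖(t + w) - q‖ ^ 2 ≤ ‖(t + w) - t‖ ^ 2 := by nlinarith [sq_nonneg ‖q - t‖]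
    exact (pow_le_pow_iff_left₀ (norm_nonneg _) (norm_nonneg _) (by norm_num)).1 hsq
  · -- second inequality
    rw [hPf]
    have hkey : c * ‖w‖ ≤ ‖w - (Submodule.orthogonalProjectionOnto T w : H)‖ := key_estimate T W hangle hw
    rw [hdiff]
    have : (t + w) - t = w := by abel
    rw [this]
    have hcpos : (0:ℝ) < c := hangle
    rw [one_div, ← div_eq_inv_mul, le_div_iff₀ hcpos]
    nlinarith [hkey]
end
end

section
/- Let T and W be closed subspaces of a Hilbert space H such that T ∩ W = {0} and T ⊕ W is closed, and let P_{T,W} be the oblique projection with range T and kernel W. Then the operator norm of P_{T,W} (on H₁ = T ⊕ W) equals 1/cos(φ_{T,W^⊥}). -/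
noncomputable section
open scoped InnerProductSpace ENNReal

/-- The set of values `|⟨g,v⟫|` over unit `v ∈ Wᗮ`. -/
def dSet {H : Type} [NormedAddCommGroup H] [InnerProductSpace ℂ H]
    (W : Submodule ℂ H) (g : H) : Set ℝ :=
  {s : ℝ | ∃ v ∈ ((Wᗮ : Submodule ℂ H) : Set H), ‖v‖ = 1 ∧ s = ‖⟪g, v⟫_ℂ‖}

variable {H : Type} [NormedAddCommGroup H] [InnerProductSpace ℂ H]

lemma dSet_bound (W : Submodule ℂ H) (g : H) : ∀ s ∈ dSet W g, s ≤ ‖g‖ := by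
  rintro s ⟨v, _, hv1, rfl⟩
  calc ‖⟪g, v⟫_ℂ‖ ≤ ‖g‖ * ‖v‖ := norm_inner_le_norm g v
    _ = ‖g‖ := by rw [hv1, mul_one]

lemma dSet_bddAbove (W : Submodule ℂ H) (g : H) : BddAbove (dSet W g) :=
  ⟨‖g‖, dSet_bound W g⟩

lemma dSet_sSup_nonneg (W : Submodule ℂ H) (g : H) : 0 ≤ sSup (dSet W g) :=
  Real.sSup_nonneg fun x hx => by
    obtain ⟨v, _, _, rfl⟩ := hx; exact norm_nonneg _

lemma dSet_sSup_le (W : Submodule ℂ H) (g : H) {w : H} (hw : w ∈ W) :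
    sSup (dSet W g) ≤ ‖g + w‖ := by
  refine Real.sSup_le ?_ (norm_nonneg _)
  rintro s ⟨v, hv, hv1, rfl⟩
  have hv' : v ∈ Wᗮ := hv
  have h0 : ⟪w, v⟫_ℂ = 0 := (Submodule.mem_orthogonal _ _).mp hv' w hw
  have : ⟪g + w, v⟫_ℂ = ⟪g, v⟫_ℂ := by rw [inner_add_left, h0, add_zero]
  calc ‖⟪g, v⟫_ℂ‖ = ‖⟪g + w, v⟫_ℂ‖ := by rw [this]
    _ ≤ ‖g + w‖ * ‖v‖ := norm_inner_le_norm _ _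
    _ = ‖g + w‖ := by rw [hv1, mul_one]

lemma dSet_approx [CompleteSpace H] (W : Submodule ℂ H) (g : H) {ε : ℝ} (hε : 0 < ε) :
    ∃ w ∈ W, ‖g - w‖ < sSup (dSet W g) + ε := by
  haveI c1 : CompleteSpace (Wᗮ : Submodule ℂ H) :=
    (Submodule.isClosed_orthogonal _).completeSpace_coe
  haveI c2 : CompleteSpace (Wᗮᗮ : Submodule ℂ H) :=
    (Submodule.isClosed_orthogonal _).completeSpace_coe
  haveI i2 : Submodule.HasOrthogonalProjection Wᗮ := Submodule.HasOrthogonalProjection.ofCompleteSpace _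
  haveI i1 : Submodule.HasOrthogonalProjection Wᗮᗮ := Submodule.HasOrthogonalProjection.ofCompleteSpace _
  set p : H := (Wᗮᗮ.orthogonalProjectionOnto g : H) with hp
  have hq : g - p ∈ Wᗮᗮᗮ := Submodule.sub_starProjection_mem_orthogonal (K := Wᗮᗮ) g
  rw [Submodule.orthogonal_orthogonal] at hq
  -- `‖g - p‖ ≤ sSup (dSet W g)`
  have key : ‖g - p‖ ≤ sSup (dSet W g) := by
    rcases eq_or_ne (g - p) 0 with h0 | h0
    · rw [h0, norm_zero]; exact dSet_sSup_nonneg W g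
    · set v : H := ((‖g - p‖ : ℂ))⁻¹ • (g - p) with hv
      have hnorm : (0 : ℝ) < ‖g - p‖ := norm_pos_iff.mpr h0
      have hvW : v ∈ Wᗮ := Submodule.smul_mem _ _ hq
      have hnc : ‖((‖g - p‖ : ℂ))⁻¹‖ = ‖g - p‖⁻¹ := by
        rw [norm_inv, Complex.norm_real, Real.norm_eq_abs, abs_of_nonneg hnorm.le]
      have hv1 : ‖v‖ = 1 := by
        rw [hv, norm_smul, hnc, inv_mul_cancel₀ hnorm.ne']
      have hip : ⟪p, v⟫_ℂ = 0 := by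
        have h1 : ⟪v, p⟫_ℂ = 0 :=
          (Submodule.mem_orthogonal _ p).mp (Wᗮᗮ.orthogonalProjectionOnto g).2 v hvW
        rw [← inner_conj_symm, h1, map_zero]
      have hgv : ‖⟪g, v⟫_ℂ‖ = ‖g - p‖ := by
        have h2 : ⟪g, v⟫_ℂ = ⟪g - p, v⟫_ℂ := by
          rw [inner_sub_left, hip, sub_zero]
        rw [h2, hv, inner_smul_right, inner_self_eq_norm_sq_to_K (𝕜 := ℂ)]
        rw [norm_mul, hnc, norm_pow, RCLike.norm_ofReal,
          abs_of_nonneg hnorm.le, pow_two, ← mul_assoc, inv_mul_cancel₀ hnorm.ne', one_mul]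
      have : ‖g - p‖ ∈ dSet W g := ⟨v, hvW, hv1, hgv.symm⟩
      exact le_csSup (dSet_bddAbove W g) this
  -- `p` is in the closure of `W`
  have hpcl : p ∈ closure (W : Set H) := by
    have h1 : p ∈ Wᗮᗮ := (Wᗮᗮ.orthogonalProjectionOnto g).2
    rw [Submodule.orthogonal_orthogonal_eq_closure] at h1
    rwa [← Submodule.topologicalClosure_coe]
  obtain ⟨w, hwW, hww⟩ := Metric.mem_closure_iff.mp hpcl ε hε
  refine ⟨w, hwW, ?_⟩
  calc ‖g - w‖ = ‖(g - p) + (p - w)‖ := by rw [sub_add_sub_cancel]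
    _ ≤ ‖g - p‖ + ‖p - w‖ := norm_add_le _ _
    _ < sSup (dSet W g) + ε := by
        have : ‖p - w‖ < ε := by rwa [← dist_eq_norm]
        exact add_lt_add_of_le_of_lt key this

/-- If `T ∩ W = {0}` and `T ⊕ W` is closed, then the oblique projection
`P_{T,W} : H₁ = T ⊕ W → T` with range `T` and kernel `W` has operator norm
`‖P_{T,W}‖ = 1/cos(φ_{T,W^⊥})`. -/
theorem oblique_projection_norm
    {H : Type} [NormedAddCommGroup H] [InnerProductSpace ℂ H] [CompleteSpace H]
    (T W : Submodule ℂ H)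
    (hdisj : T ⊓ W = ⊥) (hclosed : IsClosed ((T ⊔ W : Submodule ℂ H) : Set H))
    (P : ↥(T ⊔ W) →L[ℂ] H)
    (hP : ∀ (x : ↥(T ⊔ W)) (t w : H), t ∈ T → w ∈ W → (x : H) = t + w → P x = t) :
    ‖P‖ = 1 / cosAngleS T ((Wᗮ : Submodule ℂ H) : Set H) := by

  have hcos : cosAngleS T ((Wᗮ : Submodule ℂ H) : Set H)
      = sInf {r : ℝ | ∃ g ∈ T, ‖g‖ = 1 ∧ r = sSup (dSet W g)} := rfl
  set S : Set ℝ := {r : ℝ | ∃ g ∈ T, ‖g‖ = 1 ∧ r = sSup (dSet W g)} with hS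
  rcases eq_or_ne T ⊥ with hT | hT
  · subst hT
    have hP0 : P = 0 := by
      ext x
      obtain ⟨t, ht, w, hw, hxw⟩ := Submodule.mem_sup.mp x.2
      have h := hP x t w ht hw hxw.symm
      rw [Submodule.mem_bot] at ht
      rw [ht] at h
      simpa using h
    have hSe : S = ∅ := by
      ext r; simp only [hS, Set.mem_setOf_eq, Set.mem_empty_iff_false, iff_false]
      rintro ⟨g, hg, hg1, -⟩
      rw [Submodule.mem_bot] at hg
      rw [hg, norm_zero] at hg1; exact one_ne_zero hg1.symm
    rw [hP0, hcos, hSe, Real.sInf_empty, div_zero]; exact ContinuousLinearMap.opNorm_zero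
  · obtain ⟨t₀, ht₀T, ht₀⟩ := Submodule.exists_mem_ne_zero_of_ne_bot hT
    set g₀ : H := ‖t₀‖⁻¹ • t₀ with hg₀
    have hg₀T : g₀ ∈ T := Submodule.smul_mem _ _ ht₀T
    have hg₀1 : ‖g₀‖ = 1 := by
      rw [hg₀, norm_smul, norm_inv, norm_norm,
        inv_mul_cancel₀ (norm_pos_iff.mpr ht₀).ne']
    -- ‖P‖ ≥ 1
    have hP1 : 1 ≤ ‖P‖ := by
      have hx : g₀ ∈ T ⊔ W := Submodule.mem_sup_left hg₀T
      have hPx : P ⟨g₀, hx⟩ = g₀ :=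
        hP ⟨g₀, hx⟩ g₀ 0 hg₀T (Submodule.zero_mem _) (by rw [add_zero])
      have := P.le_opNorm ⟨g₀, hx⟩
      rw [hPx] at this
      simp only [Submodule.coe_norm, hg₀1, mul_one] at this
      exact this
    have hPpos : (0 : ℝ) < ‖P‖ := lt_of_lt_of_le one_pos hP1
    -- every element of S is ≥ ‖P‖⁻¹
    have hlb : ∀ r ∈ S, ‖P‖⁻¹ ≤ r := by
      rintro r ⟨g, hgT, hg1, rfl⟩
      refine le_of_forall_sub_le fun ε hε => ?_
      obtain ⟨w, hwW, hww⟩ := dSet_approx W g hε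
      have hx : g - w ∈ T ⊔ W := by
        have : g + (-w) ∈ T ⊔ W :=
          Submodule.add_mem_sup hgT (Submodule.neg_mem _ hwW)
        rwa [← sub_eq_add_neg] at this
      have hPx : P ⟨g - w, hx⟩ = g :=
        hP ⟨g - w, hx⟩ g (-w) hgT (Submodule.neg_mem _ hwW) (sub_eq_add_neg g w)
      have h1 : (1 : ℝ) ≤ ‖P‖ * ‖g - w‖ := by
        have := P.le_opNorm ⟨g - w, hx⟩
        rw [hPx] at this
        simp only [Submodule.coe_norm, hg1] at this
        exact this
      have h2 : ‖P‖⁻¹ ≤ ‖g - w‖ := by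
        rw [inv_eq_one_div, div_le_iff₀ hPpos]
        linarith [h1, mul_comm ‖P‖ ‖g - w‖]
      linarith [h2, hww]
    have hSne : S.Nonempty := ⟨sSup (dSet W g₀), g₀, hg₀T, hg₀1, rfl⟩
    have hSbdd : BddBelow S := ⟨0, by
      rintro r ⟨g, -, -, rfl⟩; exact dSet_sSup_nonneg W g⟩
    have hc : ‖P‖⁻¹ ≤ sInf S := le_csInf hSne hlb
    have hcpos : 0 < sInf S := lt_of_lt_of_le (inv_pos.mpr hPpos) hc
    rw [hcos]
    refine le_antisymm ?_ ?_
    · -- ‖P‖ ≤ 1 / sInf S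
      refine P.opNorm_le_bound (by positivity) fun x => ?_
      obtain ⟨t, htT, w, hwW, hx⟩ := Submodule.mem_sup.mp x.2
      have hPx : P x = t := hP x t w htT hwW hx.symm
      rcases eq_or_ne t 0 with ht | ht
      · rw [hPx, ht, norm_zero]; positivity
      · have htpos : (0 : ℝ) < ‖t‖ := norm_pos_iff.mpr ht
        set g : H := ‖t‖⁻¹ • t with hg
        have hgT : g ∈ T := Submodule.smul_mem _ _ htT
        have hg1 : ‖g‖ = 1 := by
          rw [hg, norm_smul, norm_inv, norm_norm, inv_mul_cancel₀ htpos.ne']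
        have hcle : sInf S ≤ sSup (dSet W g) :=
          csInf_le hSbdd ⟨g, hgT, hg1, rfl⟩
        have hle : sSup (dSet W g) ≤ ‖t‖⁻¹ * ‖(x : H)‖ := by
          have h1 : sSup (dSet W g) ≤ ‖g + ‖t‖⁻¹ • w‖ :=
            dSet_sSup_le W g (Submodule.smul_mem _ _ hwW)
          have h2 : g + ‖t‖⁻¹ • w = ‖t‖⁻¹ • (t + w) := by
            rw [smul_add, hg]
          rw [h2, norm_smul, norm_inv, norm_norm, hx] at h1
          exact h1
        have hmul : sInf S * ‖t‖ ≤ ‖(x : H)‖ := by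
          have h3 : sInf S ≤ ‖t‖⁻¹ * ‖(x : H)‖ := le_trans hcle hle
          calc sInf S * ‖t‖ ≤ ‖t‖⁻¹ * ‖(x : H)‖ * ‖t‖ :=
                mul_le_mul_of_nonneg_right h3 htpos.le
            _ = ‖(x : H)‖ := by field_simp
        rw [hPx]
        calc ‖t‖ ≤ ‖(x : H)‖ / sInf S := by
              rw [le_div_iff₀ hcpos, mul_comm]; exact hmul
          _ = 1 / sInf S * ‖x‖ := by
              rw [Submodule.coe_norm]; ring
    · -- 1 / sInf S ≤ ‖P‖
      rw [div_le_iff₀ hcpos]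
      calc (1 : ℝ) = ‖P‖ * ‖P‖⁻¹ := by rw [mul_inv_cancel₀ hPpos.ne']
        _ ≤ ‖P‖ * sInf S := by
            exact mul_le_mul_of_nonneg_left hc hPpos.le
end
end

section
/- Let T, U be closed subspaces of H with cos(φ_{T,U}) > 0, (u_j) a frame for U with frame bounds A, B and frame operator S = UU*. Then for all g ∈ T one has ‖Sg‖ ≥ A cos(φ_{T,U}) ‖g‖; in particular S(T) is a closed subspace of H. -/
noncomputable section
open scoped InnerProductSpace ENNReal

/-- Auxiliary: frame operator lower bound on `U`. -/
lemma frame_op_aux {H : Type} [NormedAddCommGroup H] [InnerProductSpace ℂ H]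
    (U : Submodule ℂ H) (u : ℕ → H) (A : ℝ)
    (hlow : ∀ f ∈ U, A * ‖f‖ ^ 2 ≤ ∑' j, ‖⟪u j, f⟫_ℂ‖ ^ 2)
    (S : H →L[ℂ] H) (hS : ∀ f, HasSum (fun j => ⟪u j, f⟫_ℂ • u j) (S f))
    (f : H) (hf : f ∈ U) : A * ‖f‖ ^ 2 ≤ ‖S f‖ * ‖f‖ := by
  have h1 : HasSum (fun j => ⟪f, ⟪u j, f⟫_ℂ • u j⟫_ℂ) ⟪f, S f⟫_ℂ :=
    (innerSL ℂ f).hasSum (hS f)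
  have h2 : HasSum (fun j => ((‖⟪u j, f⟫_ℂ‖ ^ 2 : ℝ) : ℂ)) ⟪f, S f⟫_ℂ := by
    refine h1.congr_fun fun j => ?_
    rw [inner_smul_right, ← inner_conj_symm f (u j), Complex.mul_conj']
    push_cast; ring
  have h3 : HasSum (fun j => ‖⟪u j, f⟫_ℂ‖ ^ 2) (⟪f, S f⟫_ℂ).re :=
    (Complex.reCLM.hasSum h2).congr_fun fun j => (Complex.ofReal_re _).symm
  have h4 : A * ‖f‖ ^ 2 ≤ (⟪f, S f⟫_ℂ).re := h3.tsum_eq ▸ hlow f hf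
  calc A * ‖f‖ ^ 2 ≤ (⟪f, S f⟫_ℂ).re := h4
    _ ≤ ‖⟪f, S f⟫_ℂ‖ := Complex.re_le_norm _
    _ ≤ ‖f‖ * ‖S f‖ := norm_inner_le_norm _ _
    _ = ‖S f‖ * ‖f‖ := mul_comm _ _

/-- If `cos(φ_{T,U}) > 0` and `S` is the frame operator of a frame for `U`
with bounds `A, B`, then `‖Sg‖ ≥ A cos(φ_{T,U}) ‖g‖` for all `g ∈ T`; in particular
`S(T)` is closed. -/
theorem frame_operator_lower_bound_on_T
    {H : Type} [NormedAddCommGroup H] [InnerProductSpace ℂ H] [CompleteSpace H]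
    (T U : Submodule ℂ H) [CompleteSpace T] [CompleteSpace U]
    (hangle : 0 < cosAngleP T U)
    (u : ℕ → H) (A B : ℝ) (hA : 0 < A) (hAB : A ≤ B) (hframe : IsFrameFor u U A B)
    (S : H →L[ℂ] H) (hS : ∀ f, HasSum (fun j => ⟪u j, f⟫_ℂ • u j) (S f)) :
    (∀ g ∈ T, A * cosAngleP T U * ‖g‖ ≤ ‖S g‖) ∧
      IsClosed (S '' (T : Set H)) := by
  set c := cosAngleP T U with hc
  have hlow : ∀ f ∈ U, A * ‖f‖ ^ 2 ≤ ∑' j, ‖⟪u j, f⟫_ℂ‖ ^ 2 :=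
    fun f hf => (hframe.2 f hf).1
  have key : ∀ g ∈ T, A * c * ‖g‖ ≤ ‖S g‖ := by
    intro g hg
    rcases eq_or_ne g 0 with rfl | hg0
    · simp
    set p : H := (U.orthogonalProjectionOnto g : H) with hp
    have hpU : p ∈ U := (U.orthogonalProjectionOnto g).2
    -- S g = S p
    have hSgp : S g = S p := by
      have horth : g - p ∈ Uᗮ := Submodule.sub_starProjection_mem_orthogonal (K := U) g
      have hinner : ∀ j, ⟪u j, g⟫_ℂ = ⟪u j, p⟫_ℂ := by
        intro j
        have h0 : ⟪u j, g - p⟫_ℂ = 0 :=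
          (Submodule.mem_orthogonal U (g - p)).1 horth (u j) (hframe.1 j)
        rw [inner_sub_right] at h0
        linear_combination h0
      have h1 : HasSum (fun j => ⟪u j, p⟫_ℂ • u j) (S g) :=
        (hS g).congr_fun fun j => by rw [hinner]
      exact h1.unique (hS p)
    -- c * ‖g‖ ≤ ‖p‖
    have hcp : c * ‖g‖ ≤ ‖p‖ := by
      have hgn : (0:ℝ) < ‖g‖ := norm_pos_iff.2 hg0
      set g' : H := ((‖g‖ : ℂ))⁻¹ • g with hg'
      have hg'T : g' ∈ T := T.smul_mem _ hg
      have hg'n : ‖g'‖ = 1 := by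
        rw [hg', norm_smul]
        simp [norm_inv, hgn.ne']
      have hproj : (U.orthogonalProjectionOnto g' : H) = ((‖g‖ : ℂ))⁻¹ • p := by
        rw [hg', map_smul]
        rfl
      have hmem : ‖g‖⁻¹ * ‖p‖ ∈
          {r : ℝ | ∃ g ∈ T, ‖g‖ = 1 ∧ r = ‖(U.orthogonalProjectionOnto g : H)‖} := by
        refine ⟨g', hg'T, hg'n, ?_⟩
        rw [hproj, norm_smul]
        simp
      have hbdd : BddBelow
          {r : ℝ | ∃ g ∈ T, ‖g‖ = 1 ∧ r = ‖(U.orthogonalProjectionOnto g : H)‖} := by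
        refine ⟨0, fun r hr => ?_⟩
        obtain ⟨g, -, -, rfl⟩ := hr
        positivity
      have hle : c ≤ ‖g‖⁻¹ * ‖p‖ := csInf_le hbdd hmem
      calc c * ‖g‖ ≤ (‖g‖⁻¹ * ‖p‖) * ‖g‖ := by
            exact mul_le_mul_of_nonneg_right hle hgn.le
        _ = ‖p‖ := by field_simp
    -- A * ‖p‖ ≤ ‖S p‖
    have hAp : A * ‖p‖ ≤ ‖S p‖ := by
      rcases eq_or_ne p 0 with hp0 | hp0
      · simp [hp0]
      · have hpn : (0:ℝ) < ‖p‖ := norm_pos_iff.2 hp0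
        have := frame_op_aux U u A hlow S hS p hpU
        rw [pow_two, ← mul_assoc] at this
        exact le_of_mul_le_mul_right this hpn
    calc A * c * ‖g‖ = A * (c * ‖g‖) := by ring
      _ ≤ A * ‖p‖ := by exact mul_le_mul_of_nonneg_left hcp hA.le
      _ ≤ ‖S p‖ := hAp
      _ = ‖S g‖ := by rw [hSgp]
  refine ⟨key, ?_⟩
  have hc0 : (0:ℝ) < A * c := mul_pos hA hangle
  set F : T →L[ℂ] H := S.comp T.subtypeL with hF
  have hanti : AntilipschitzWith ⟨(A * c)⁻¹, by positivity⟩ F := by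
    refine F.antilipschitz_of_bound fun x => ?_
    have := key x.1 x.2
    have hx : ‖x‖ = ‖(x : H)‖ := rfl
    rw [hx]
    show ‖(x : H)‖ ≤ (A * c)⁻¹ * ‖F x‖
    rw [le_inv_mul_iff₀ hc0]
    exact this
  have hclosed : IsClosed (Set.range F) :=
    (hanti.isClosedEmbedding F.uniformContinuous).isClosed_range
  have hrange : Set.range F = S '' (T : Set H) := by
    ext y
    constructor
    · rintro ⟨⟨x, hx⟩, rfl⟩
      exact ⟨x, hx, rfl⟩
    · rintro ⟨x, hx, rfl⟩
      exact ⟨⟨x, hx⟩, rfl⟩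
  rwa [hrange] at hclosed
end
end

section
/- Let T, U be closed subspaces of H with cos(φ_{T,U}) > 0 and (u_j) a frame for U with frame bounds A, B and frame operator S. Then the angle between T and S(T) satisfies cos(φ_{T,S(T)}) ≥ (A/B) cos(φ_{T,U}) > 0. -/
noncomputable section
open scoped InnerProductSpace ENNReal

section Aux
variable {H : Type} [NormedAddCommGroup H] [InnerProductSpace ℂ H]

lemma re_inner_smul_self (g : H) (c : ℂ) (w : H) (h : ⟪w, g⟫_ℂ = c) :
    RCLike.re ⟪g, c • w⟫_ℂ = ‖c‖ ^ 2 := by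
  have h2 : ⟪g, w⟫_ℂ = starRingEnd ℂ c := by rw [← h, inner_conj_symm]
  rw [inner_smul_right, h2, Complex.mul_conj']
  norm_cast

lemma amgm_aux (t a b : ℝ) (ht : 0 < t) (ha : 0 ≤ a) (hb : 0 ≤ b) :
    a * b ≤ t / 2 * a ^ 2 + t⁻¹ / 2 * b ^ 2 := by
  rw [div_mul_eq_mul_div, div_mul_eq_mul_div, inv_mul_eq_div, div_div, div_add_div _ _ (by positivity : (2:ℝ) ≠ 0) (by positivity : t * 2 ≠ 0)]
  rw [le_div_iff₀ (by positivity)]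
  nlinarith [sq_nonneg (t * a - b)]

end Aux

/-- If `cos(φ_{T,U}) > 0` and `S` is the frame operator of a frame for `U`
with bounds `A, B`, then `cos(φ_{T,S(T)}) ≥ (A/B) cos(φ_{T,U}) > 0`. -/
theorem angle_T_ST_lower_bound
    {H : Type} [NormedAddCommGroup H] [InnerProductSpace ℂ H] [CompleteSpace H]
    (T U : Submodule ℂ H) [CompleteSpace T] [CompleteSpace U]
    (hangle : 0 < cosAngleP T U)
    (u : ℕ → H) (A B : ℝ) (hA : 0 < A) (hAB : A ≤ B) (hframe : IsFrameFor u U A B)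
    (S : H →L[ℂ] H) (hS : ∀ f, HasSum (fun j => ⟪u j, f⟫_ℂ • u j) (S f)) :
    (A / B) * cosAngleP T U ≤ cosAngleS T (S '' (T : Set H)) ∧
      0 < cosAngleS T (S '' (T : Set H)) := by
  obtain ⟨hu, hfb⟩ := hframe
  have hB : 0 < B := lt_of_lt_of_le hA hAB
  set c := cosAngleP T U with hc
  set P : H → H := fun x => (U.orthogonalProjectionOnto x : H) with hP
  -- inner products see only the projection
  have h_inner_proj : ∀ (j : ℕ) (g : H), ⟪u j, g⟫_ℂ = ⟪u j, P g⟫_ℂ := by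
    intro j g
    rw [← sub_eq_zero, ← inner_sub_right]
    exact (Submodule.mem_orthogonal _ _).mp
      (Submodule.sub_starProjection_mem_orthogonal (K := U) g) (u j) (hu j)
  have hPmem : ∀ g : H, P g ∈ U := fun g => (U.orthogonalProjectionOnto g).2
  have hPnorm : ∀ g : H, ‖P g‖ ≤ ‖g‖ := by
    intro g
    have := (U.orthogonalProjectionOnto).le_opNorm g
    have h1 := Submodule.orthogonalProjectionOnto_norm_le U
    calc ‖P g‖ = ‖U.orthogonalProjectionOnto g‖ := rfl
      _ ≤ ‖U.orthogonalProjectionOnto‖ * ‖g‖ := this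
      _ ≤ 1 * ‖g‖ := mul_le_mul_of_nonneg_right h1 (norm_nonneg g)
      _ = ‖g‖ := one_mul _
  -- key sums
  have hsum : ∀ h g : H, HasSum (fun j => RCLike.re (⟪u j, g⟫_ℂ * ⟪h, u j⟫_ℂ))
      (RCLike.re ⟪h, S g⟫_ℂ) := by
    intro h g
    have h1 : HasSum (fun j => ⟪h, ⟪u j, g⟫_ℂ • u j⟫_ℂ) ⟪h, S g⟫_ℂ :=
      (innerSL ℂ h).hasSum (hS g)
    have h2 := Complex.reCLM.hasSum h1
    simpa [inner_smul_right] using h2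
  have hsumg : ∀ g : H, HasSum (fun j => ‖⟪u j, g⟫_ℂ‖ ^ 2) (RCLike.re ⟪g, S g⟫_ℂ) := by
    intro g
    have h1 : HasSum (fun j => ⟪g, ⟪u j, g⟫_ℂ • u j⟫_ℂ) ⟪g, S g⟫_ℂ :=
      (innerSL ℂ g).hasSum (hS g)
    have h2 := Complex.reCLM.hasSum h1
    have h3 : ∀ j, Complex.reCLM ⟪g, ⟪u j, g⟫_ℂ • u j⟫_ℂ = ‖⟪u j, g⟫_ℂ‖ ^ 2 :=
      fun j => re_inner_smul_self g _ (u j) rfl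
    simp only [h3] at h2
    simpa using h2
  -- frame bounds transferred to arbitrary g
  have htsum : ∀ g : H, ∑' j, ‖⟪u j, P g⟫_ℂ‖ ^ 2 = RCLike.re ⟪g, S g⟫_ℂ := by
    intro g
    rw [← (hsumg g).tsum_eq]
    congr 1
    ext j
    rw [h_inner_proj j g]
  have hlow : ∀ g : H, A * ‖P g‖ ^ 2 ≤ RCLike.re ⟪g, S g⟫_ℂ := by
    intro g
    rw [← htsum g]
    exact (hfb (P g) (hPmem g)).1
  have hupp : ∀ g : H, RCLike.re ⟪g, S g⟫_ℂ ≤ B * ‖P g‖ ^ 2 := by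
    intro g
    rw [← htsum g]
    exact (hfb (P g) (hPmem g)).2
  -- norm bound ‖S g‖ ≤ B ‖P g‖ when P g ≠ 0 and S g ≠ 0
  have hSnorm : ∀ g : H, P g ≠ 0 → S g ≠ 0 → ‖S g‖ ≤ B * ‖P g‖ := by
    intro g hPg0 hSg0
    have hPgpos : 0 < ‖P g‖ := norm_pos_iff.mpr hPg0
    have hSgpos : 0 < ‖S g‖ := norm_pos_iff.mpr hSg0
    set t : ℝ := ‖S g‖ / ‖P g‖ with ht
    have htpos : 0 < t := div_pos hSgpos hPgpos
    have hsum1 := hsum (S g) g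
    have hsum2 := hsumg g
    have hsum3 := hsumg (S g)
    have hterm : ∀ j : ℕ, RCLike.re (⟪u j, g⟫_ℂ * ⟪S g, u j⟫_ℂ) ≤
        t / 2 * ‖⟪u j, g⟫_ℂ‖ ^ 2 + t⁻¹ / 2 * ‖⟪u j, S g⟫_ℂ‖ ^ 2 := by
      intro j
      have h1 : RCLike.re (⟪u j, g⟫_ℂ * ⟪S g, u j⟫_ℂ) ≤ ‖⟪u j, g⟫_ℂ * ⟪S g, u j⟫_ℂ‖ :=
        RCLike.re_le_norm _
      have h2 : ‖⟪u j, g⟫_ℂ * ⟪S g, u j⟫_ℂ‖ = ‖⟪u j, g⟫_ℂ‖ * ‖⟪u j, S g⟫_ℂ‖ := by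
        rw [norm_mul, norm_inner_symm (S g) (u j)]
      calc RCLike.re (⟪u j, g⟫_ℂ * ⟪S g, u j⟫_ℂ) ≤ ‖⟪u j, g⟫_ℂ‖ * ‖⟪u j, S g⟫_ℂ‖ := by
            rw [← h2]; exact h1
        _ ≤ _ := amgm_aux t _ _ htpos (norm_nonneg _) (norm_nonneg _)
    have hsumRHS : HasSum (fun j => t / 2 * ‖⟪u j, g⟫_ℂ‖ ^ 2 + t⁻¹ / 2 * ‖⟪u j, S g⟫_ℂ‖ ^ 2)
        (t / 2 * RCLike.re ⟪g, S g⟫_ℂ + t⁻¹ / 2 * RCLike.re ⟪S g, S (S g)⟫_ℂ) :=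
      (hsum2.mul_left (t / 2)).add (hsum3.mul_left (t⁻¹ / 2))
    have hle : RCLike.re ⟪S g, S g⟫_ℂ ≤
        t / 2 * RCLike.re ⟪g, S g⟫_ℂ + t⁻¹ / 2 * RCLike.re ⟪S g, S (S g)⟫_ℂ :=
      hasSum_le hterm hsum1 hsumRHS
    have e1 : RCLike.re ⟪S g, S g⟫_ℂ = ‖S g‖ ^ 2 := inner_self_eq_norm_sq (S g)
    have h2 : RCLike.re ⟪g, S g⟫_ℂ ≤ B * ‖P g‖ ^ 2 := hupp g
    have h3 : RCLike.re ⟪S g, S (S g)⟫_ℂ ≤ B * ‖S g‖ ^ 2 := by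
      calc RCLike.re ⟪S g, S (S g)⟫_ℂ ≤ B * ‖P (S g)‖ ^ 2 := hupp (S g)
        _ ≤ B * ‖S g‖ ^ 2 := by gcongr; exact hPnorm (S g)
    have hfinal : ‖S g‖ ^ 2 ≤ B * ‖P g‖ * ‖S g‖ := by
      have m1 : 0 ≤ t / 2 := by positivity
      have m2 : 0 ≤ t⁻¹ / 2 := by positivity
      have := hle
      rw [e1] at this
      have step : ‖S g‖ ^ 2 ≤ t / 2 * (B * ‖P g‖ ^ 2) + t⁻¹ / 2 * (B * ‖S g‖ ^ 2) := by
        calc ‖S g‖ ^ 2 ≤ t / 2 * RCLike.re ⟪g, S g⟫_ℂ + t⁻¹ / 2 * RCLike.re ⟪S g, S (S g)⟫_ℂ := this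
          _ ≤ t / 2 * (B * ‖P g‖ ^ 2) + t⁻¹ / 2 * (B * ‖S g‖ ^ 2) := by
              gcongr
      have ht1 : t / 2 * (B * ‖P g‖ ^ 2) = B * ‖P g‖ * ‖S g‖ / 2 := by
        rw [ht]; field_simp
      have ht2 : t⁻¹ / 2 * (B * ‖S g‖ ^ 2) = B * ‖P g‖ * ‖S g‖ / 2 := by
        rw [ht]; field_simp
      rw [ht1, ht2] at step
      linarith
    nlinarith [hfinal, hSgpos]
  -- the key pointwise bound
  have hbdd0 : ∀ r ∈ {r : ℝ | ∃ g ∈ T, ‖g‖ = 1 ∧ r = ‖P g‖}, (0:ℝ) ≤ r := by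
    rintro r ⟨g, _, _, rfl⟩; exact norm_nonneg _
  have key : ∀ g ∈ T, ‖g‖ = 1 →
      (A / B) * c ≤ sSup {s : ℝ | ∃ v ∈ S '' (T : Set H), ‖v‖ = 1 ∧ s = ‖⟪g, v⟫_ℂ‖} := by
    intro g hgT hg1
    have hPle : c ≤ ‖P g‖ := by
      apply csInf_le ⟨0, hbdd0⟩
      exact ⟨g, hgT, hg1, rfl⟩
    have hPpos : 0 < ‖P g‖ := lt_of_lt_of_le hangle hPle
    have hPg0 : P g ≠ 0 := norm_pos_iff.mp hPpos
    have hrepos : 0 < RCLike.re ⟪g, S g⟫_ℂ :=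
      lt_of_lt_of_le (by positivity) (hlow g)
    have hSg0 : S g ≠ 0 := by
      intro h
      rw [h] at hrepos
      simp at hrepos
    have hSgpos : 0 < ‖S g‖ := norm_pos_iff.mpr hSg0
    have hSB : ‖S g‖ ≤ B * ‖P g‖ := hSnorm g hPg0 hSg0
    set v : H := (‖S g‖ : ℂ)⁻¹ • S g with hv
    have hvmem : v ∈ S '' (T : Set H) := by
      refine ⟨(‖S g‖ : ℂ)⁻¹ • g, T.smul_mem _ hgT, ?_⟩
      rw [map_smul]
    have hvnorm : ‖v‖ = 1 := by
      rw [hv, norm_smul]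
      simp [hSgpos.ne']
    have hinner : ‖⟪g, v⟫_ℂ‖ = ‖⟪g, S g⟫_ℂ‖ / ‖S g‖ := by
      rw [hv, inner_smul_right, norm_mul]
      simp [norm_inv, div_eq_inv_mul]
    have hstep : (A / B) * c ≤ ‖⟪g, v⟫_ℂ‖ := by
      rw [hinner]
      have h1 : A * ‖P g‖ ^ 2 ≤ ‖⟪g, S g⟫_ℂ‖ :=
        le_trans (hlow g) (RCLike.re_le_norm _)
      have h2 : (A / B) * c ≤ (A / B) * ‖P g‖ :=
        mul_le_mul_of_nonneg_left hPle (le_of_lt (div_pos hA hB))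
      have h3 : (A / B) * ‖P g‖ = A * ‖P g‖ ^ 2 / (B * ‖P g‖) := by
        field_simp
      have h4 : A * ‖P g‖ ^ 2 / (B * ‖P g‖) ≤ ‖⟪g, S g⟫_ℂ‖ / ‖S g‖ :=
        div_le_div₀ (norm_nonneg _) h1 hSgpos hSB
      linarith
    have hbddS : BddAbove {s : ℝ | ∃ v ∈ S '' (T : Set H), ‖v‖ = 1 ∧ s = ‖⟪g, v⟫_ℂ‖} := by
      refine ⟨1, ?_⟩
      rintro s ⟨w, _, hw1, rfl⟩
      calc ‖⟪g, w⟫_ℂ‖ ≤ ‖g‖ * ‖w‖ := norm_inner_le_norm g w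
        _ = 1 := by rw [hg1, hw1, one_mul]
    exact le_trans hstep (le_csSup hbddS ⟨v, hvmem, hvnorm, rfl⟩)
  -- nonemptiness of the defining set
  have hne : ∃ g ∈ T, ‖g‖ = (1:ℝ) := by
    by_contra h
    push_neg at h
    have : {r : ℝ | ∃ g ∈ T, ‖g‖ = 1 ∧ r = ‖P g‖} = ∅ := by
      ext r
      simp only [Set.mem_setOf_eq, Set.mem_empty_iff_false, iff_false]
      rintro ⟨g, hgT, hg1, _⟩
      exact h g hgT hg1
    rw [hc] at hangle
    unfold cosAngleP at hangle
    rw [show {r : ℝ | ∃ g ∈ T, ‖g‖ = 1 ∧ r = ‖(U.orthogonalProjectionOnto g : H)‖} = ∅ from this] at hangle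
    simp [Real.sInf_empty] at hangle
  obtain ⟨g₀, hg₀T, hg₀1⟩ := hne
  have hmain : (A / B) * c ≤ cosAngleS T (S '' (T : Set H)) := by
    unfold cosAngleS
    apply le_csInf
    · exact ⟨_, g₀, hg₀T, hg₀1, rfl⟩
    · rintro r ⟨g, hgT, hg1, rfl⟩
      exact key g hgT hg1
  refine ⟨hmain, lt_of_lt_of_le ?_ hmain⟩
  exact mul_pos (div_pos hA hB) hangle
end
end

section
/- Let T, U be closed subspaces of H with cos(φ_{T,U}) > 0, (u_j) a frame for U with synthesis operator U and frame operator S = UU*, and (t_k) a frame for T with synthesis operator T. Then the operator R = T (U*T)† U* is an idempotent with range T and null space S(T)^⊥, i.e., R is the oblique projection P_{T, S(T)^⊥}. -/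
noncomputable section
open scoped InnerProductSpace ENNReal

/-- `D` is the Moore–Penrose pseudoinverse of `A` (the four Penrose conditions,
with self-adjointness expressed via inner products). -/
def IsMoorePenrose {E F : Type} [NormedAddCommGroup E] [InnerProductSpace ℂ E]
    [NormedAddCommGroup F] [InnerProductSpace ℂ F]
    (A : E →L[ℂ] F) (D : F →L[ℂ] E) : Prop :=
  A.comp (D.comp A) = A ∧ D.comp (A.comp D) = D ∧
    (∀ x y : F, ⟪A (D x), y⟫_ℂ = ⟪x, A (D y)⟫_ℂ) ∧
    (∀ x y : E, ⟪D (A x), y⟫_ℂ = ⟪x, D (A y)⟫_ℂ)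

/-- Two CLMs out of ℓ² agreeing on the canonical unit vectors are equal. -/
lemma aux_clm_ext_single {X : Type} [NormedAddCommGroup X] [NormedSpace ℂ X]
    (f g : Lp2 →L[ℂ] X) (h : ∀ k, f (lp.single 2 k 1) = g (lp.single 2 k 1)) : f = g := by
  ext c
  have hc : HasSum (fun i : ℕ => lp.single 2 i (c i)) c := lp.hasSum_single (by norm_num) c
  refine (hc.mapL f).unique ?_
  convert hc.mapL g using 2 with i
  have e : lp.single 2 i (c i) = ((c i) • lp.single 2 i (1:ℂ) : Lp2) := by
    rw [← lp.single_smul]; norm_num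
  rw [e, map_smul, map_smul, h]

lemma aux_norm_sq (x : Lp2) : ‖x‖^2 = ∑' i, ‖x i‖^2 := by
  have h := lp.norm_rpow_eq_tsum (p := 2) (by norm_num) x
  simp only [ENNReal.toReal_ofNat] at h
  exact_mod_cast h

lemma aux_inner_single (k : ℕ) (v : Lp2) : ⟪lp.single 2 k (1:ℂ), v⟫_ℂ = v k := by
  rw [lp.inner_single_left]; simp [RCLike.inner_apply]


set_option maxHeartbeats 1000000 in
/-- With `cos(φ_{T,U}) > 0`, the operator `R = T (U*T)† U*` is idempotent
with range `T` and null space `S(T)^⊥`, i.e. `R` is the oblique projection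
`P_{T,S(T)^⊥}`. -/
theorem least_squares_is_oblique_projection
    {H : Type} [NormedAddCommGroup H] [InnerProductSpace ℂ H] [CompleteSpace H]
    (T U : Submodule ℂ H) [CompleteSpace T] [CompleteSpace U]
    (hangle : 0 < cosAngleP T U)
    (u : ℕ → H) (A B : ℝ) (hA : 0 < A) (hAB : A ≤ B) (hframe : IsFrameFor u U A B)
    (Usyn : Lp2 →L[ℂ] H) (hUsyn : ∀ j, Usyn (lp.single 2 j 1) = u j)
    (Ustar : H →L[ℂ] Lp2) (hUstar : ∀ f j, Ustar f j = ⟪u j, f⟫_ℂ)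
    (S : H →L[ℂ] H) (hSdef : S = Usyn.comp Ustar)
    (t : ℕ → H) (C D' : ℝ) (hC : 0 < C) (hCD : C ≤ D') (htframe : IsFrameFor t T C D')
    (Tsyn : Lp2 →L[ℂ] H) (hTsyn : ∀ k, Tsyn (lp.single 2 k 1) = t k)
    (Dag : Lp2 →L[ℂ] Lp2) (hDag : IsMoorePenrose (Ustar.comp Tsyn) Dag)
    (R : H →L[ℂ] H) (hR : R = Tsyn.comp (Dag.comp Ustar)) :
    R.comp R = R ∧ LinearMap.range (R : H →ₗ[ℂ] H) = T ∧
      (∀ f : H, R f = 0 ↔ ∀ v ∈ S '' (T : Set H), ⟪v, f⟫_ℂ = 0) := by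
  obtain ⟨hDag1, hDag2, hDag3, hDag4⟩ := hDag
  obtain ⟨humem, huineq⟩ := hframe
  obtain ⟨htmem, htineq⟩ := htframe
  -- adjoint relation for U
  have hUadj : ∀ (c : Lp2) (f : H), ⟪Usyn c, f⟫_ℂ = ⟪c, Ustar f⟫_ℂ := by
    have heq : Usyn = ContinuousLinearMap.adjoint Ustar := by
      apply aux_clm_ext_single
      intro k
      rw [hUsyn]
      apply ext_inner_right ℂ
      intro v
      rw [ContinuousLinearMap.adjoint_inner_left, aux_inner_single, hUstar]
    intro c f
    rw [heq, ContinuousLinearMap.adjoint_inner_left]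
  -- analysis operator for T
  set Tstar : H →L[ℂ] Lp2 := ContinuousLinearMap.adjoint Tsyn with hTstarDef
  have hTstar_apply : ∀ (f : H) (k : ℕ), Tstar f k = ⟪t k, f⟫_ℂ := by
    intro f k
    have h1 : ⟪lp.single 2 k (1:ℂ), Tstar f⟫_ℂ = ⟪t k, f⟫_ℂ := by
      rw [hTstarDef, ContinuousLinearMap.adjoint_inner_right, hTsyn]
    rwa [aux_inner_single] at h1
  -- range of Tsyn is contained in T
  have hTclosed : IsClosed (T : Set H) :=
    (completeSpace_coe_iff_isComplete.mp ‹CompleteSpace T›).isClosed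
  have hTmem : ∀ c : Lp2, Tsyn c ∈ T := by
    intro c
    have hc : HasSum (fun i : ℕ => lp.single 2 i (c i)) c := lp.hasSum_single (by norm_num) c
    have h2 := hc.mapL Tsyn
    refine hTclosed.mem_of_tendsto h2.tendsto_sum_nat ?_
    filter_upwards with n
    refine Submodule.sum_mem T (fun i _ => ?_)
    have e : lp.single 2 i (c i) = ((c i) • lp.single 2 i (1:ℂ) : Lp2) := by
      rw [← lp.single_smul]; norm_num
    rw [e, map_smul, hTsyn]
    exact T.smul_mem _ (htmem i)
  -- cos angle bound
  have hcos : ∀ g ∈ T, cosAngleP T U * ‖g‖ ≤ ‖(U.orthogonalProjectionOnto g : H)‖ := by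
    intro g hg
    rcases eq_or_ne g 0 with rfl | hg0
    · simp
    have hn : (0:ℝ) < ‖g‖ := norm_pos_iff.mpr hg0
    set c : ℂ := ((‖g‖⁻¹ : ℝ) : ℂ) with hcdef
    have hg' : c • g ∈ T := T.smul_mem _ hg
    have hnc : ‖c‖ = ‖g‖⁻¹ := by
      rw [hcdef, Complex.norm_real, Real.norm_eq_abs, abs_of_pos (inv_pos.mpr hn)]
    have hng' : ‖c • g‖ = 1 := by
      rw [norm_smul, hnc, inv_mul_cancel₀ hn.ne']
    have hbdd : BddBelow {r : ℝ | ∃ g ∈ T, ‖g‖ = 1 ∧ r = ‖(U.orthogonalProjectionOnto g : H)‖} := by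
      refine ⟨0, ?_⟩
      rintro r ⟨x, -, -, rfl⟩
      exact norm_nonneg _
    have h1 : cosAngleP T U ≤ ‖(U.orthogonalProjectionOnto (c • g) : H)‖ :=
      csInf_le hbdd ⟨c • g, hg', hng', rfl⟩
    have h2 : (U.orthogonalProjectionOnto (c • g) : H) = c • (U.orthogonalProjectionOnto g : H) := by
      rw [map_smul]; rfl
    rw [h2, norm_smul, hnc] at h1
    calc cosAngleP T U * ‖g‖ ≤ (‖g‖⁻¹ * ‖(U.orthogonalProjectionOnto g : H)‖) * ‖g‖ := by
          exact mul_le_mul_of_nonneg_right h1 hn.le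
      _ = ‖(U.orthogonalProjectionOnto g : H)‖ := by field_simp
  -- injectivity of Ustar on T
  have hker : ∀ x ∈ T, Ustar x = 0 → x = 0 := by
    intro g hg h0
    have hj : ∀ j, ⟪u j, g⟫_ℂ = 0 := by
      intro j
      rw [← hUstar g j, h0]
      rfl
    set p : H := (U.orthogonalProjectionOnto g : H) with hpdef
    have hp : ∀ j, ⟪u j, p⟫_ℂ = 0 := by
      intro j
      have horth : g - p ∈ Uᗮ := U.sub_starProjection_mem_orthogonal g
      have h1 := (Submodule.mem_orthogonal U (g - p)).mp horth (u j) (humem j)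
      rw [inner_sub_right, hj j] at h1
      linear_combination -h1
    have hsum : ∑' j, ‖⟪u j, p⟫_ℂ‖^2 = 0 := by
      simp [hp]
    have hlow := (huineq p (SetLike.coe_mem (U.orthogonalProjectionOnto g))).1
    rw [hsum] at hlow
    have hp0 : ‖p‖ = 0 := by
      by_contra hne
      have hpos : 0 < ‖p‖^2 := by positivity
      nlinarith
    have hgn := hcos g hg
    rw [← hpdef, hp0] at hgn
    by_contra hne
    have hpos : 0 < ‖g‖ := norm_pos_iff.mpr hne
    nlinarith
  -- a fixed point property : R (Tsyn c) = Tsyn c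
  have hRfix : ∀ c : Lp2, R (Tsyn c) = Tsyn c := by
    intro c
    have h1 := ContinuousLinearMap.ext_iff.mp hDag1 c
    simp only [ContinuousLinearMap.comp_apply] at h1
    have h2 : Ustar (Tsyn (Dag (Ustar (Tsyn c))) - Tsyn c) = 0 := by
      rw [map_sub, h1, sub_self]
    have h3 : Tsyn (Dag (Ustar (Tsyn c))) - Tsyn c ∈ T := T.sub_mem (hTmem _) (hTmem _)
    have h4 := hker _ h3 h2
    rw [hR]
    simp only [ContinuousLinearMap.comp_apply]
    exact sub_eq_zero.mp h4
  -- Part 1 : idempotent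
  have part1 : R.comp R = R := by
    ext f
    have h2 := ContinuousLinearMap.ext_iff.mp hDag2 (Ustar f)
    simp only [ContinuousLinearMap.comp_apply] at h2 ⊢
    rw [hR]
    simp only [ContinuousLinearMap.comp_apply]
    rw [h2]
  -- surjectivity of the frame operator on T
  have hTstar_norm : ∀ f : H, ‖Tstar f‖^2 = ∑' k, ‖⟪t k, f⟫_ℂ‖^2 := by
    intro f
    rw [aux_norm_sq]
    congr 1
    funext k
    rw [hTstar_apply]
  let G : H →L[ℂ] H := Tsyn.comp Tstar
  let S' : T →L[ℂ] T := (G.comp T.subtypeL).codRestrict T (fun x => hTmem _)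
  have hS'coe : ∀ x : T, (S' x : H) = Tsyn (Tstar (x : H)) := fun x => rfl
  have hS'inner : ∀ x : T, ⟪x, S' x⟫_ℂ = ((‖Tstar (x:H)‖:ℂ))^2 := by
    intro x
    rw [Submodule.coe_inner, hS'coe]
    rw [← ContinuousLinearMap.adjoint_inner_left Tsyn]
    exact inner_self_eq_norm_sq_to_K _
  have hS'low : ∀ x : T, C * ‖x‖^2 ≤ ‖x‖ * ‖S' x‖ := by
    intro x
    have h1 : C * ‖(x:H)‖^2 ≤ ‖Tstar (x:H)‖^2 := by
      rw [hTstar_norm]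
      exact (htineq _ x.2).1
    have h2 : ‖Tstar (x:H)‖^2 = ‖⟪x, S' x⟫_ℂ‖ := by
      rw [hS'inner]
      rw [← Complex.ofReal_pow, Complex.norm_real, Real.norm_eq_abs,
        abs_of_nonneg (by positivity)]
    have h3 : ‖⟪x, S' x⟫_ℂ‖ ≤ ‖x‖ * ‖S' x‖ := norm_inner_le_norm _ _
    have h1' : C * ‖x‖^2 ≤ ‖Tstar (x:H)‖^2 := h1
    linarith
  have hS'bound : ∀ x : T, ‖x‖ ≤ C⁻¹ * ‖S' x‖ := by
    intro x
    rcases eq_or_ne x 0 with rfl | hx0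
    · simp
    have hpos : 0 < ‖x‖ := norm_pos_iff.mpr hx0
    have := hS'low x
    rw [le_inv_mul_iff₀ hC]
    nlinarith
  have hanti : AntilipschitzWith (C⁻¹).toNNReal S' := by
    apply S'.antilipschitz_of_bound
    intro x
    have : ((C⁻¹).toNNReal : ℝ) = C⁻¹ := Real.coe_toNNReal _ (inv_pos.mpr hC).le
    rw [this]
    exact hS'bound x
  have hclosedrange : IsClosed (Set.range S') := hanti.isClosed_range S'.uniformContinuous
  have hKclosed : IsClosed ((LinearMap.range (S' : T →ₗ[ℂ] T) : Submodule ℂ T) : Set T) := by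
    rwa [LinearMap.coe_range]
  haveI : CompleteSpace (LinearMap.range (S' : T →ₗ[ℂ] T) : Submodule ℂ T) := hKclosed.completeSpace_coe
  have hKtop : (LinearMap.range (S' : T →ₗ[ℂ] T) : Submodule ℂ T) = ⊤ := by
    rw [← Submodule.orthogonal_eq_bot_iff]
    rw [Submodule.eq_bot_iff]
    intro y hy
    have h0 : ⟪S' y, y⟫_ℂ = 0 :=
      (Submodule.mem_orthogonal _ y).mp hy (S' y) (LinearMap.mem_range_self _ y)
    have h1 : ⟪y, S' y⟫_ℂ = 0 := by
      rw [← inner_conj_symm, h0, map_zero]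
    rw [hS'inner] at h1
    have h2 : ‖Tstar (y:H)‖ = 0 := by
      have h1' : ((‖Tstar (y:H)‖:ℂ))^2 = 0 := h1
      have h1'' := pow_eq_zero_iff (n := 2) (by norm_num) |>.mp h1'
      exact_mod_cast h1''
    have h3 : C * ‖(y:H)‖^2 ≤ 0 := by
      have := (htineq _ y.2).1
      rw [← hTstar_norm, h2] at this
      simpa using this
    have h4 : (y:H) = 0 := by
      by_contra hne
      have : 0 < ‖(y:H)‖^2 := pow_pos (norm_pos_iff.mpr hne) 2
      nlinarith
    exact Subtype.ext h4
  have hT_range : ∀ f ∈ T, ∃ c : Lp2, Tsyn c = f := by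
    intro f hf
    have : (⟨f, hf⟩ : T) ∈ (LinearMap.range (S' : T →ₗ[ℂ] T) : Submodule ℂ T) := by
      rw [hKtop]; trivial
    obtain ⟨x, hx⟩ := this
    exact ⟨Tstar (x:H), congrArg Subtype.val hx⟩
  -- Part 2 : range
  have part2 : LinearMap.range (R : H →ₗ[ℂ] H) = T := by
    apply le_antisymm
    · rintro _ ⟨f, rfl⟩
      rw [hR]
      exact hTmem _
    · intro f hf
      obtain ⟨c, rfl⟩ := hT_range f hf
      exact ⟨Tsyn c, hRfix c⟩
  refine ⟨part1, part2, ?_⟩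
  -- Part 3 : null space
  intro f
  constructor
  · intro h0 v hv
    obtain ⟨g, hg, rfl⟩ := hv
    obtain ⟨c, rfl⟩ := hT_range g hg
    rw [hSdef]
    simp only [ContinuousLinearMap.comp_apply]
    rw [hUadj]
    have h1 := ContinuousLinearMap.ext_iff.mp hDag1 c
    simp only [ContinuousLinearMap.comp_apply] at h1
    have h3 := hDag3 (Ustar (Tsyn c)) (Ustar f)
    simp only [ContinuousLinearMap.comp_apply] at h3
    have h4 : Tsyn (Dag (Ustar f)) = 0 := by
      rw [hR] at h0
      simpa only [ContinuousLinearMap.comp_apply] using h0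
    rw [← h1, h3, h4, map_zero, inner_zero_right]
  · intro hperp
    rw [hR]
    simp only [ContinuousLinearMap.comp_apply]
    set w : Lp2 := Ustar f with hw
    refine hker _ (hTmem _) ?_
    -- show Ustar (Tsyn (Dag w)) = 0
    have hPP : Ustar (Tsyn (Dag (Ustar (Tsyn (Dag w))))) = Ustar (Tsyn (Dag w)) := by
      have h1 := ContinuousLinearMap.ext_iff.mp hDag1 (Dag w)
      simpa only [ContinuousLinearMap.comp_apply] using h1
    have hinner : ⟪Ustar (Tsyn (Dag w)), Ustar (Tsyn (Dag w))⟫_ℂ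
        = ⟪w, Ustar (Tsyn (Dag w))⟫_ℂ := by
      have h3 := hDag3 w (Ustar (Tsyn (Dag w)))
      simp only [ContinuousLinearMap.comp_apply] at h3
      rw [h3, hPP]
    have hz : ⟪w, Ustar (Tsyn (Dag w))⟫_ℂ = 0 := by
      have h5 := hperp (S (Tsyn (Dag w))) ⟨Tsyn (Dag w), hTmem _, rfl⟩
      rw [hSdef] at h5
      simp only [ContinuousLinearMap.comp_apply] at h5
      rw [hUadj] at h5
      rw [← inner_conj_symm, hw, h5, map_zero]
    rw [hz] at hinner
    exact inner_self_eq_zero.mp hinner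
end
end

section
/- Let T, U be closed subspaces of H with cos(φ_{T,U}) > 0 and (u_j) a frame for U with analysis operator U*. For d ∈ ℓ², the least squares problem argmin_{g ∈ T} ‖U* g − d‖² has a unique solution in T. -/
noncomputable section
open scoped InnerProductSpace ENNReal NNReal

/-- With `cos(φ_{T,U}) > 0`, for every `d ∈ ℓ²` the least squares problem
`argmin_{g ∈ T} ‖U*g − d‖` has a unique solution in `T`. -/
theorem least_squares_unique_solution
    {H : Type} [NormedAddCommGroup H] [InnerProductSpace ℂ H] [CompleteSpace H]
    (T U : Submodule ℂ H) [CompleteSpace T] [CompleteSpace U]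
    (hangle : 0 < cosAngleP T U)
    (u : ℕ → H) (A B : ℝ) (hA : 0 < A) (hAB : A ≤ B) (hframe : IsFrameFor u U A B)
    (Ustar : H →L[ℂ] Lp2) (hUstar : ∀ f j, Ustar f j = ⟪u j, f⟫_ℂ)
    (d : Lp2) :
    ∃! g : H, g ∈ T ∧ ∀ h ∈ T, ‖Ustar g - d‖ ≤ ‖Ustar h - d‖ := by
  classical
  set c := cosAngleP T U with hc
  -- Step 1: c * ‖g‖ ≤ ‖P_U g‖ for g ∈ T
  have hPbound : ∀ g ∈ T, c * ‖g‖ ≤ ‖(U.orthogonalProjectionOnto g : H)‖ := by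
    intro g hg
    rcases eq_or_ne g 0 with rfl | hg0
    · simp
    · have hng : (0:ℝ) < ‖g‖ := norm_pos_iff.mpr hg0
      set g' : H := ((‖g‖⁻¹ : ℝ) : ℂ) • g with hg'
      have hg'T : g' ∈ T := T.smul_mem _ hg
      have hng' : ‖g'‖ = 1 := by
        simp [hg', norm_smul, abs_of_pos (inv_pos.mpr hng), inv_mul_cancel₀ hng.ne']
      have hbdd : BddBelow {r : ℝ | ∃ g ∈ T, ‖g‖ = 1 ∧
          r = ‖(U.orthogonalProjectionOnto g : H)‖} := by
        refine ⟨0, ?_⟩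
        rintro r ⟨g, -, -, rfl⟩
        positivity
      have h1 : c ≤ ‖(U.orthogonalProjectionOnto g' : H)‖ :=
        csInf_le hbdd ⟨g', hg'T, hng', rfl⟩
      have h2 : ‖(U.orthogonalProjectionOnto g' : H)‖
          = ‖g‖⁻¹ * ‖(U.orthogonalProjectionOnto g : H)‖ := by
        rw [hg', map_smul]
        simp [norm_smul, abs_of_pos (inv_pos.mpr hng)]
      rw [h2] at h1
      calc c * ‖g‖ ≤ (‖g‖⁻¹ * ‖(U.orthogonalProjectionOnto g : H)‖) * ‖g‖ :=
            mul_le_mul_of_nonneg_right h1 hng.le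
        _ = ‖(U.orthogonalProjectionOnto g : H)‖ := by
            field_simp
  -- Step 2: norm identity on lp
  have hnorm : ∀ f : H, ‖Ustar f‖ ^ 2 = ∑' j, ‖⟪u j, f⟫_ℂ‖ ^ 2 := by
    intro f
    have hp : (0:ℝ) < (2:ℝ≥0∞).toReal := by norm_num
    have h := lp.norm_rpow_eq_tsum hp (Ustar f)
    have h2 : ((2:ℝ≥0∞).toReal) = (2:ℝ) := by norm_num
    rw [h2] at h
    have hr : ∀ x : ℝ, 0 ≤ x → x ^ (2:ℝ) = x ^ 2 := by
      intro x hx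
      rw [show ((2:ℝ)) = ((2:ℕ):ℝ) by norm_num, Real.rpow_natCast]
    calc ‖Ustar f‖ ^ 2 = ‖Ustar f‖ ^ (2:ℝ) := (hr _ (norm_nonneg _)).symm
      _ = ∑' j, ‖Ustar f j‖ ^ (2:ℝ) := h
      _ = ∑' j, ‖⟪u j, f⟫_ℂ‖ ^ 2 := by
          refine tsum_congr fun j => ?_
          rw [hUstar, hr _ (norm_nonneg _)]
  -- Step 3: inner product only sees the projection
  have hinner : ∀ (g : H) (j : ℕ),
      ⟪u j, g⟫_ℂ = ⟪u j, (U.orthogonalProjectionOnto g : H)⟫_ℂ := by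
    intro g j
    have h := Submodule.sub_starProjection_mem_orthogonal (K := U) g
    have h0 : ⟪u j, g - (U.orthogonalProjectionOnto g : H)⟫_ℂ = 0 :=
      (Submodule.mem_orthogonal U _).mp h (u j) (hframe.1 j)
    rw [inner_sub_right, sub_eq_zero] at h0
    exact h0
  -- Step 4: lower bound  ε‖g‖ ≤ ‖Ustar g‖ on T
  set ε : ℝ := Real.sqrt A * c with hε
  have hεpos : 0 < ε := mul_pos (Real.sqrt_pos.mpr hA) hangle
  have hlow : ∀ g ∈ T, ε * ‖g‖ ≤ ‖Ustar g‖ := by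
    intro g hg
    have hPU : (U.orthogonalProjectionOnto g : H) ∈ U := (U.orthogonalProjectionOnto g).2
    have hf := (hframe.2 _ hPU).1
    have hsum : ‖Ustar g‖ ^ 2 = ∑' j, ‖⟪u j, (U.orthogonalProjectionOnto g : H)⟫_ℂ‖ ^ 2 := by
      rw [hnorm]
      exact tsum_congr fun j => by rw [hinner]
    have hP := hPbound g hg
    have key : (ε * ‖g‖) ^ 2 ≤ ‖Ustar g‖ ^ 2 := by
      rw [hsum]
      have h1 : (ε * ‖g‖) ^ 2 = A * (c * ‖g‖) ^ 2 := by
        rw [hε]; rw [mul_pow, mul_pow, Real.sq_sqrt hA.le]; ring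
      rw [h1]
      have h2 : (c * ‖g‖) ^ 2 ≤ ‖(U.orthogonalProjectionOnto g : H)‖ ^ 2 := by
        have := mul_nonneg hangle.le (norm_nonneg g)
        nlinarith
      nlinarith
    have := pow_le_pow_left₀ (mul_nonneg hεpos.le (norm_nonneg g)) (le_of_eq rfl)
    exact (pow_le_pow_iff_left₀ (mul_nonneg hεpos.le (norm_nonneg g))
      (norm_nonneg _) (by norm_num)).mp key
  -- Step 5: image of T is a closed submodule of ℓ²
  set K : Submodule ℂ Lp2 := T.map (Ustar : H →ₗ[ℂ] Lp2) with hK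
  have hKclosed : IsClosed (K : Set Lp2) := by
    set f : T →L[ℂ] Lp2 := Ustar.comp T.subtypeL with hf
    have hanti : AntilipschitzWith (⟨ε, hεpos.le⟩ : ℝ≥0)⁻¹ f := by
      apply f.antilipschitz_of_bound
      intro x
      change ‖x‖ ≤ ε⁻¹ * ‖f x‖
      have hl := hlow x x.2
      have : ‖(x : H)‖ ≤ ε⁻¹ * ‖f x‖ := by
        rw [le_inv_mul_iff₀ hεpos]
        simpa [hf] using hl
      simpa using this
    have hcl := hanti.isClosed_range f.uniformContinuous
    have : (K : Set Lp2) = Set.range f := by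
      ext x
      simp only [hK, Submodule.map_coe, Set.mem_image, SetLike.mem_coe, Set.mem_range]
      constructor
      · rintro ⟨y, hy, rfl⟩; exact ⟨⟨y, hy⟩, rfl⟩
      · rintro ⟨⟨y, hy⟩, rfl⟩; exact ⟨y, hy, rfl⟩
    rw [this]; exact hcl
  haveI : CompleteSpace K := hKclosed.completeSpace_coe
  set v : Lp2 := (K.orthogonalProjectionOnto d : Lp2) with hv
  have hvK : v ∈ K := (K.orthogonalProjectionOnto d).2
  -- Pythagoras
  have hpyth : ∀ w ∈ K, ‖d - v‖ ^ 2 + ‖v - w‖ ^ 2 = ‖d - w‖ ^ 2 := by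
    intro w hw
    have horth : ⟪d - v, v - w⟫_ℂ = 0 := by
      have hmem : d - v ∈ Kᗮ := Submodule.sub_starProjection_mem_orthogonal (K := K) d
      have hvw : v - w ∈ K := K.sub_mem hvK hw
      exact (Submodule.mem_orthogonal' K _).mp hmem _ hvw
    have hsplit : d - w = (d - v) + (v - w) := by abel
    rw [hsplit, @norm_add_sq ℂ _ _ _ _ (d - v) (v - w), horth]
    simp only [map_zero, mul_zero, add_zero]
  obtain ⟨g, hgT, hgv⟩ : ∃ y ∈ T, Ustar y = v := hvK
  refine ⟨g, ⟨hgT, ?_⟩, ?_⟩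
  · intro h hh
    have hhK : Ustar h ∈ K := ⟨h, hh, rfl⟩
    have := hpyth (Ustar h) hhK
    have h1 : ‖d - v‖ ^ 2 ≤ ‖d - Ustar h‖ ^ 2 := by nlinarith [sq_nonneg ‖v - Ustar h‖]
    have h2 : ‖d - v‖ ≤ ‖d - Ustar h‖ :=
      (pow_le_pow_iff_left₀ (norm_nonneg _) (norm_nonneg _) (by norm_num)).mp h1
    rw [hgv, norm_sub_rev v d, norm_sub_rev (Ustar h) d]
    exact h2
  · rintro g' ⟨hg'T, hmin⟩
    have hwK : Ustar g' ∈ K := ⟨g', hg'T, rfl⟩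
    have hle : ‖Ustar g' - d‖ ≤ ‖Ustar g - d‖ := hmin g hgT
    rw [hgv] at hle
    have hp := hpyth (Ustar g') hwK
    have h0 : ‖v - Ustar g'‖ = 0 := by
      have hle' : ‖d - Ustar g'‖ ≤ ‖d - v‖ := by
        rw [norm_sub_rev d (Ustar g'), norm_sub_rev d v]; exact hle
      have hsq : ‖d - Ustar g'‖ ^ 2 ≤ ‖d - v‖ ^ 2 :=
        pow_le_pow_left₀ (norm_nonneg _) hle' 2
      have h1 : ‖v - Ustar g'‖ ^ 2 ≤ 0 := by linarith
      have h2 : ‖v - Ustar g'‖ ^ 2 = 0 := le_antisymm h1 (sq_nonneg _)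
      exact pow_eq_zero_iff (by norm_num : (2:ℕ) ≠ 0) |>.mp h2
    have heq : Ustar g' = v := (sub_eq_zero.mp (norm_eq_zero.mp h0)).symm
    have hdiff : Ustar (g' - g) = 0 := by
      rw [map_sub, heq, hgv, sub_self]
    have hle2 : ε * ‖g' - g‖ ≤ 0 := by
      have := hlow (g' - g) (T.sub_mem hg'T hgT)
      rwa [hdiff, norm_zero] at this
    have : ‖g' - g‖ = 0 := le_antisymm (nonpos_of_mul_nonpos_right hle2 hεpos) (norm_nonneg _)
    have := sub_eq_zero.mp (norm_eq_zero.mp this)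
    exact this
end
end

section
/- Let T, U be closed subspaces of H with cos(φ_{T,U}) > 0, (u_j) a frame for U with analysis operator U*, and let Q₁: ℓ² → T be the least squares reconstruction operator given by Q₁ d = argmin_{g ∈ T} ‖U* g − d‖₂. If Q: ℓ² → T is any bounded operator with QU*g = g for all g ∈ T, then ‖Q‖_op ≥ ‖Q₁‖_op. -/
noncomputable section
open scoped InnerProductSpace ENNReal

set_option maxHeartbeats 400000 in
/-- The least-squares reconstruction operator `Q₁` has the smallest
operator norm among all bounded perfect reconstruction operators `Q : ℓ² → T`. -/
theorem least_squares_minimal_norm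
    {H : Type} [NormedAddCommGroup H] [InnerProductSpace ℂ H] [CompleteSpace H]
    (T U : Submodule ℂ H) [CompleteSpace T] [CompleteSpace U]
    (hangle : 0 < cosAngleP T U)
    (u : ℕ → H) (A B : ℝ) (hA : 0 < A) (hAB : A ≤ B) (hframe : IsFrameFor u U A B)
    (Ustar : H →L[ℂ] Lp2) (hUstar : ∀ f j, Ustar f j = ⟪u j, f⟫_ℂ)
    (Q₁ : Lp2 →L[ℂ] H) (hQ₁T : ∀ d, Q₁ d ∈ T)
    (hQ₁min : ∀ d : Lp2, ∀ g ∈ T, ‖Ustar (Q₁ d) - d‖ ≤ ‖Ustar g - d‖)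
    (Q : Lp2 →L[ℂ] H) (hQT : ∀ d, Q d ∈ T)
    (hperfect : ∀ g ∈ T, Q (Ustar g) = g) :
    ‖Q₁‖ ≤ ‖Q‖ := by
  refine Q₁.opNorm_le_bound (norm_nonneg Q) (fun d => ?_)
  set V : Submodule ℂ Lp2 := Submodule.map (Ustar : H →ₗ[ℂ] Lp2) T with hV
  set v : Lp2 := Ustar (Q₁ d) with hv
  have hvV : v ∈ V := ⟨Q₁ d, hQ₁T d, rfl⟩
  haveI : Nonempty V := ⟨⟨v, hvV⟩⟩
  have hmin : ‖d - v‖ = ⨅ w : V, ‖d - w‖ := by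
    refine le_antisymm (le_ciInf (fun w => ?_)) ?_
    · obtain ⟨g, hgT, hg⟩ := w.2
      rw [norm_sub_rev, ← hg]
      rw [norm_sub_rev d]
      exact hQ₁min d g hgT
    · have hbdd : BddBelow (Set.range fun w : V => ‖d - (w : Lp2)‖) := by
        refine ⟨0, ?_⟩
        rintro r ⟨w, rfl⟩
        exact norm_nonneg _
      exact ciInf_le hbdd (⟨v, hvV⟩ : V)
  have horth : ∀ w ∈ V, ⟪d - v, w⟫_ℂ = 0 :=
    (Submodule.norm_eq_iInf_iff_inner_eq_zero V hvV).mp hmin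
  have hpyth : ‖(d - v) + v‖ * ‖(d - v) + v‖ = ‖d - v‖ * ‖d - v‖ + ‖v‖ * ‖v‖ :=
    norm_add_sq_eq_norm_sq_add_norm_sq_of_inner_eq_zero _ _ (horth v hvV)
  rw [sub_add_cancel] at hpyth
  have hvd : ‖v‖ ≤ ‖d‖ := by
    nlinarith [norm_nonneg v, norm_nonneg d, mul_self_nonneg ‖d - v‖]
  have hQv : Q v = Q₁ d := hperfect (Q₁ d) (hQ₁T d)
  calc ‖Q₁ d‖ = ‖Q v‖ := by rw [hQv]
    _ ≤ ‖Q‖ * ‖v‖ := Q.le_opNorm v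
    _ ≤ ‖Q‖ * ‖d‖ := mul_le_mul_of_nonneg_left hvd (norm_nonneg Q)
end
end

section
/- Let T, U be closed subspaces of H with cos(φ_{T,U}) > 0. Then cos(φ_{T, P_U(T)}) = cos(φ_{T,U}), where P_U(T) denotes the image of T under the orthogonal projection onto U. -/
noncomputable section
open scoped InnerProductSpace ENNReal

lemma sup_inner_eq {H : Type} [NormedAddCommGroup H] [InnerProductSpace ℂ H]
    [CompleteSpace H] (U : Submodule ℂ H) [CompleteSpace U]
    (Y : Set H) (hYU : Y ⊆ (U : Set H)) (g : H)
    (hmem : (U.orthogonalProjectionOnto g : H) ≠ 0 →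
      ((‖(U.orthogonalProjectionOnto g : H)‖ : ℂ)⁻¹ • (U.orthogonalProjectionOnto g : H)) ∈ Y) :
    sSup {s : ℝ | ∃ v ∈ Y, ‖v‖ = 1 ∧ s = ‖⟪g, v⟫_ℂ‖} =
      ‖(U.orthogonalProjectionOnto g : H)‖ := by
  set p : H := (U.orthogonalProjectionOnto g : H) with hp
  have key : ∀ v ∈ Y, ⟪g, v⟫_ℂ = ⟪p, v⟫_ℂ := by
    intro v hv
    have h0 : ⟪g - p, v⟫_ℂ = 0 := U.starProjection_inner_eq_zero g v (hYU hv)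
    have := inner_sub_left (𝕜 := ℂ) g p v
    rw [h0] at this
    linear_combination -this
  have hub : ∀ s ∈ {s : ℝ | ∃ v ∈ Y, ‖v‖ = 1 ∧ s = ‖⟪g, v⟫_ℂ‖}, s ≤ ‖p‖ := by
    rintro s ⟨v, hv, hv1, rfl⟩
    rw [key v hv]
    calc ‖⟪p, v⟫_ℂ‖ ≤ ‖p‖ * ‖v‖ := norm_inner_le_norm p v
    _ = ‖p‖ := by rw [hv1, mul_one]
  by_cases hp0 : p = 0
  · rw [hp0, norm_zero]
    by_cases hne : {s : ℝ | ∃ v ∈ Y, ‖v‖ = 1 ∧ s = ‖⟪g, v⟫_ℂ‖}.Nonempty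
    · apply le_antisymm
      · apply csSup_le hne
        intro s hs
        have := hub s hs
        rwa [hp0, norm_zero] at this
      · obtain ⟨s, hs⟩ := hne
        obtain ⟨v, hv, hv1, rfl⟩ := hs
        have h0 : ‖⟪g, v⟫_ℂ‖ = 0 := by
          rw [key v hv, hp0, inner_zero_left, norm_zero]
        have : (0:ℝ) ∈ {s : ℝ | ∃ v ∈ Y, ‖v‖ = 1 ∧ s = ‖⟪g, v⟫_ℂ‖} :=
          ⟨v, hv, hv1, h0.symm⟩
        exact le_csSup ⟨0, fun x hx => by
          have := hub x hx; rwa [hp0, norm_zero] at this⟩ this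
    · rw [Set.not_nonempty_iff_eq_empty.mp hne, Real.sSup_empty]
  · set v0 : H := (‖p‖ : ℂ)⁻¹ • p with hv0
    have hpn : ‖p‖ ≠ 0 := norm_ne_zero_iff.mpr hp0
    have hv0n : ‖v0‖ = 1 := by
      rw [hv0, norm_smul, norm_inv, Complex.norm_real, Real.norm_eq_abs,
        abs_of_nonneg (norm_nonneg p), inv_mul_cancel₀ hpn]
    have hinner : ‖⟪g, v0⟫_ℂ‖ = ‖p‖ := by
      rw [key v0 (hmem hp0), hv0, inner_smul_right]
      have hps : ⟪p, p⟫_ℂ = (‖p‖ : ℂ) ^ 2 := by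
        rw [inner_self_eq_norm_sq_to_K]; norm_cast
      rw [hps, norm_mul, norm_inv, Complex.norm_real, Real.norm_eq_abs,
        abs_of_nonneg (norm_nonneg p)]
      rw [norm_pow, Complex.norm_real, Real.norm_eq_abs, abs_of_nonneg (norm_nonneg p)]
      field_simp
    have hmem' : ‖p‖ ∈ {s : ℝ | ∃ v ∈ Y, ‖v‖ = 1 ∧ s = ‖⟪g, v⟫_ℂ‖} :=
      ⟨v0, hmem hp0, hv0n, hinner.symm⟩
    exact le_antisymm (csSup_le ⟨_, hmem'⟩ hub) (le_csSup ⟨‖p‖, hub⟩ hmem')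

/-- If `cos(φ_{T,U}) > 0` then `cos(φ_{T, P_U(T)}) = cos(φ_{T,U})`. -/
theorem angle_T_PUT_eq_angle_T_U
    {H : Type} [NormedAddCommGroup H] [InnerProductSpace ℂ H] [CompleteSpace H]
    (T U : Submodule ℂ H) [CompleteSpace U]
    (hangle : 0 < cosAngleS T ((U : Submodule ℂ H) : Set H)) :
    cosAngleS T ((fun x => (U.orthogonalProjectionOnto x : H)) '' (T : Set H)) =
      cosAngleS T ((U : Submodule ℂ H) : Set H) := by
  unfold cosAngleS
  congr 1
  ext r
  have key : ∀ g ∈ T,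
      sSup {s : ℝ | ∃ v ∈ ((fun x => (U.orthogonalProjectionOnto x : H)) '' (T : Set H)),
        ‖v‖ = 1 ∧ s = ‖⟪g, v⟫_ℂ‖} =
      sSup {s : ℝ | ∃ v ∈ ((U : Submodule ℂ H) : Set H), ‖v‖ = 1 ∧ s = ‖⟪g, v⟫_ℂ‖} := by
    intro g hgT
    have h1 : sSup {s : ℝ | ∃ v ∈ ((U : Submodule ℂ H) : Set H), ‖v‖ = 1 ∧ s = ‖⟪g, v⟫_ℂ‖}
        = ‖(U.orthogonalProjectionOnto g : H)‖ :=
      sup_inner_eq U _ (subset_refl _) g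
        (fun _ => U.smul_mem _ (SetLike.coe_mem _))
    have h2 : sSup {s : ℝ | ∃ v ∈ ((fun x => (U.orthogonalProjectionOnto x : H)) '' (T : Set H)),
        ‖v‖ = 1 ∧ s = ‖⟪g, v⟫_ℂ‖} = ‖(U.orthogonalProjectionOnto g : H)‖ := by
      refine sup_inner_eq U _ ?_ g ?_
      · rintro v ⟨t, ht, rfl⟩
        exact SetLike.coe_mem _
      · intro hp0
        refine ⟨((‖(U.orthogonalProjectionOnto g : H)‖ : ℂ)⁻¹) • g,
          T.smul_mem _ hgT, ?_⟩
        simp [map_smul]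
    rw [h1, h2]
  constructor
  · rintro ⟨g, hgT, hg1, rfl⟩
    exact ⟨g, hgT, hg1, key g hgT⟩
  · rintro ⟨g, hgT, hg1, rfl⟩
    exact ⟨g, hgT, hg1, (key g hgT).symm⟩
end
end

section
/- Let (u_j) be a frame for a closed subspace U of H with frame bounds A, B and frame operator S₁ = UU*. For λ ∈ (0,1] define M_λ = λI + (1−λ)S₁ and u_{λ,j} = M_λ^{−1/2} u_j. Then (u_{λ,j}) is a frame for U with frame bounds A/(λ + (1−λ)A) and B/(λ + (1−λ)B). -/
noncomputable section
open scoped InnerProductSpace ENNReal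

/-- For `λ ∈ (0,1]`, `M_λ = λI + (1−λ)S₁` and `u_{λ,j} = M_λ^{−1/2} u_j`,
the sequence `(u_{λ,j})` is a frame for `U` with bounds `A/(λ+(1−λ)A)` and
`B/(λ+(1−λ)B)`. Here `R = M_λ^{−1/2}` is characterized as the positive self-adjoint
operator with `R² = M_λ⁻¹`. -/
theorem weighted_frame_bounds
    {H : Type} [NormedAddCommGroup H] [InnerProductSpace ℂ H] [CompleteSpace H]
    (U : Submodule ℂ H) [CompleteSpace U]
    (u : ℕ → H) (A B : ℝ) (hA : 0 < A) (hAB : A ≤ B) (hframe : IsFrameFor u U A B)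
    (S₁ : H →L[ℂ] H) (hS₁ : ∀ f, HasSum (fun j => ⟪u j, f⟫_ℂ • u j) (S₁ f))
    (lam : ℝ) (hlam0 : 0 < lam) (hlam1 : lam ≤ 1)
    (M : H →L[ℂ] H)
    (hM : M = (lam : ℂ) • ContinuousLinearMap.id ℂ H + ((1 - lam : ℝ) : ℂ) • S₁)
    (R : H →L[ℂ] H)
    (hRsa : ∀ x y : H, ⟪R x, y⟫_ℂ = ⟪x, R y⟫_ℂ)
    (hRpos : ∀ x : H, 0 ≤ (⟪x, R x⟫_ℂ).re)
    (hRsq : M.comp (R.comp R) = ContinuousLinearMap.id ℂ H ∧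
      (R.comp R).comp M = ContinuousLinearMap.id ℂ H) :
    IsFrameFor (fun j => R (u j)) U
      (A / (lam + (1 - lam) * A)) (B / (lam + (1 - lam) * B)) := by
  have hlamC : (lam : ℂ) ≠ 0 := by exact_mod_cast hlam0.ne'
  -- pointwise versions of hRsq
  have h1 : ∀ x, M (R (R x)) = x := fun x => congrArg (· x) hRsq.1
  have h2 : ∀ x, R (R (M x)) = x := fun x => congrArg (· x) hRsq.2
  -- commutation
  have hcomm : ∀ x, M (R x) = R (M x) := by
    intro x
    conv_lhs => rw [← h2 x]
    exact h1 (R (M x))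
  -- HasSum for inner products
  have hsum : ∀ f w : H, HasSum (fun j => ⟪u j, f⟫_ℂ * ⟪w, u j⟫_ℂ) ⟪w, S₁ f⟫_ℂ := by
    intro f w
    have := (innerSL ℂ w).hasSum (hS₁ f)
    simpa [inner_smul_right, mul_comm] using this
  -- key real sum
  have hkey : ∀ g : H, HasSum (fun j => ‖⟪u j, g⟫_ℂ‖ ^ 2) (⟪g, S₁ g⟫_ℂ).re := by
    intro g
    have h := hsum g g
    have h' : ∀ j, ⟪u j, g⟫_ℂ * ⟪g, u j⟫_ℂ = ((((‖⟪u j, g⟫_ℂ‖ ^ 2) : ℝ)) : ℂ) := by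
      intro j
      rw [← inner_conj_symm g (u j), RCLike.mul_conj]
      norm_cast
    rw [funext h'] at h
    have h2' := RCLike.hasSum_re (𝕜 := ℂ) h
    simpa only [RCLike.re_to_complex, Complex.ofReal_re] using h2'
  -- S₁ vanishes on Uᗮ
  have hS₁perp : ∀ v ∈ Uᗮ, S₁ v = 0 := by
    intro v hv
    have hz : ∀ j, ⟪u j, v⟫_ℂ = 0 := fun j =>
      (Submodule.mem_orthogonal U v).mp hv (u j) (hframe.1 j)
    have h0 : HasSum (fun j => ⟪u j, v⟫_ℂ • u j) 0 := by
      simpa [hz] using (hasSum_zero : HasSum (fun _ : ℕ => (0 : H)) 0)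
    exact (hS₁ v).unique h0
  -- M on Uᗮ
  have hMperp : ∀ v ∈ Uᗮ, M v = (lam : ℂ) • v := by
    intro v hv
    rw [hM]
    simp [hS₁perp v hv]
  -- R maps U into U
  have hRU : ∀ f ∈ U, R f ∈ U := by
    rcases eq_or_lt_of_le hlam1 with hl1 | hl1
    · -- lam = 1 : R = id
      have hMid : ∀ x, M x = x := by
        intro x
        rw [hM]
        simp [hl1]
      have hRR : ∀ x, R (R x) = x := fun x => by
        have := h2 x
        rwa [hMid] at this
      have hRid : ∀ x, R x = x := by
        intro x
        have hy : R (R x - x) = -(R x - x) := by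
          rw [map_sub, hRR]
          abel
        have h0 : 0 ≤ (⟪R x - x, R (R x - x)⟫_ℂ).re := hRpos _
        rw [hy, inner_neg_right] at h0
        have hn : (⟪R x - x, R x - x⟫_ℂ).re = ‖R x - x‖ ^ 2 :=
          inner_self_eq_norm_sq (𝕜 := ℂ) _
        simp only [Complex.neg_re] at h0
        rw [hn] at h0
        have hsq : ‖R x - x‖ ^ 2 = 0 := le_antisymm (by linarith) (sq_nonneg _)
        have hz : R x - x = 0 := by
          simpa using (pow_eq_zero_iff (by norm_num : (2:ℕ) ≠ 0)).mp hsq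
        exact eq_of_sub_eq_zero hz
      intro f hf
      rw [hRid]
      exact hf
    · -- lam < 1
      have hRperp : ∀ v ∈ Uᗮ, R v ∈ Uᗮ := by
        intro v hv
        have hv2 : R (R v) = (lam : ℂ)⁻¹ • v := by
          have hh := h2 v
          rw [hMperp v hv, map_smul, map_smul] at hh
          rw [eq_inv_smul_iff₀ hlamC]
          exact hh
        have hw2 : R (R (R v)) = (lam : ℂ)⁻¹ • R v := by
          have := congrArg R hv2
          rwa [map_smul] at this
        have hMw : M (R v) = (lam : ℂ) • R v := by
          have := congrArg M hw2
          rw [h1 (R v), map_smul] at this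
          rw [← inv_smul_eq_iff₀ (by simpa using hlamC)]
          exact this.symm
        have hS₁w : S₁ (R v) = 0 := by
          have := hMw
          rw [hM] at this
          simp only [ContinuousLinearMap.add_apply, ContinuousLinearMap.smul_apply,
            ContinuousLinearMap.id_apply] at this
          have h3 : ((1 - lam : ℝ) : ℂ) • S₁ (R v) = 0 := by
            rwa [add_eq_left] at this
          have hne : ((1 - lam : ℝ) : ℂ) ≠ 0 :=
            Complex.ofReal_ne_zero.mpr (by linarith)
          exact (smul_eq_zero.mp h3).resolve_left hne
        -- deduce R v ∈ Uᗮ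
        set w := R v with hw
        have hp : w - (U.orthogonalProjectionOnto w : H) ∈ Uᗮ := U.sub_starProjection_mem_orthogonal w
        set p : H := (U.orthogonalProjectionOnto w : H) with hpdef
        have hip : ∀ j, ⟪u j, w⟫_ℂ = ⟪u j, p⟫_ℂ := by
          intro j
          have h0 : ⟪u j, w - p⟫_ℂ = 0 :=
            (Submodule.mem_orthogonal U _).mp hp (u j) (hframe.1 j)
          rw [inner_sub_right, sub_eq_zero] at h0
          exact h0
        have hts0 : (⟪w, S₁ w⟫_ℂ).re = 0 := by rw [hS₁w]; simp
        have htsum : ∑' j, ‖⟪u j, p⟫_ℂ‖ ^ 2 = 0 := by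
          have := (hkey w).tsum_eq
          rw [hts0] at this
          rw [← this]
          exact tsum_congr fun j => by rw [hip j]
        have hfr := (hframe.2 p (U.orthogonalProjectionOnto w).2).1
        rw [htsum] at hfr
        have hp0 : p = 0 := by
          have hsq : ‖p‖ ^ 2 = 0 := le_antisymm (by nlinarith) (sq_nonneg _)
          simpa using (pow_eq_zero_iff (by norm_num : (2:ℕ) ≠ 0)).mp hsq
        have : w - p = w := by rw [hp0, sub_zero]
        rwa [← this]
      intro f hf
      have hmem : R f ∈ Uᗮᗮ := by
        rw [Submodule.mem_orthogonal]
        intro v hv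
        have h0 : ⟪f, R v⟫_ℂ = 0 :=
          (Submodule.mem_orthogonal U (R v)).mp (hRperp v hv) f hf
        calc ⟪v, R f⟫_ℂ = ⟪R v, f⟫_ℂ := (hRsa v f).symm
          _ = (starRingEnd ℂ) ⟪f, R v⟫_ℂ := (inner_conj_symm (R v) f).symm
          _ = 0 := by rw [h0]; simp
      rwa [Submodule.orthogonal_orthogonal] at hmem
  -- positive denominators
  have hDA : 0 < lam + (1 - lam) * A := by nlinarith
  have hDB : 0 < lam + (1 - lam) * B := by nlinarith
  refine ⟨fun j => hRU (u j) (hframe.1 j), ?_⟩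
  intro f hf
  have hg : R f ∈ U := hRU f hf
  set t : ℝ := (⟪R f, S₁ (R f)⟫_ℂ).re with ht
  have hts : ∑' j, ‖⟪R (u j), f⟫_ℂ‖ ^ 2 = t := by
    rw [show (fun j => ‖⟪R (u j), f⟫_ℂ‖ ^ 2) = fun j => ‖⟪u j, R f⟫_ℂ‖ ^ 2 from
      funext fun j => by rw [hRsa], (hkey (R f)).tsum_eq]
  have hAg := (hframe.2 (R f) hg).1
  have hBg := (hframe.2 (R f) hg).2
  rw [(hkey (R f)).tsum_eq] at hAg hBg
  -- norm identity
  have hnf : ‖f‖ ^ 2 = lam * ‖R f‖ ^ 2 + (1 - lam) * t := by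
    have e1 : ⟪f, f⟫_ℂ = ⟪R f, M (R f)⟫_ℂ := by
      rw [hRsa, ← hcomm (R f), h1]
    have e4 : ⟪R f, M (R f)⟫_ℂ
        = (lam : ℂ) * ⟪R f, R f⟫_ℂ + ((1 - lam : ℝ) : ℂ) * ⟪R f, S₁ (R f)⟫_ℂ := by
      rw [hM]
      simp only [ContinuousLinearMap.add_apply, ContinuousLinearMap.smul_apply,
        ContinuousLinearMap.id_apply, inner_add_right, inner_smul_right]
    have e5 : (⟪f, f⟫_ℂ).re = lam * (⟪R f, R f⟫_ℂ).re + (1 - lam) * t := by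
      rw [e1, e4]
      simp [Complex.add_re, Complex.mul_re, ht]
    have hff : (⟪f, f⟫_ℂ).re = ‖f‖ ^ 2 := inner_self_eq_norm_sq (𝕜 := ℂ) f
    have hgg : (⟪R f, R f⟫_ℂ).re = ‖R f‖ ^ 2 := inner_self_eq_norm_sq (𝕜 := ℂ) (R f)
    rw [← hff, ← hgg]
    exact e5
  constructor
  · rw [hts, div_mul_eq_mul_div, div_le_iff₀ hDA]
    nlinarith [mul_le_mul_of_nonneg_left hAg hlam0.le]
  · rw [hts, div_mul_eq_mul_div, le_div_iff₀ hDB]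
    nlinarith [mul_le_mul_of_nonneg_left hBg hlam0.le]
end
end
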